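/- arXiv:0909.1661 — 7 statements merged into one kernel-verified Lean document; each statement's English description precedes it below -/
import Mathlib

section
/- Let d be a nonzero rational number. The splitting field inside ℂ of the cubic polynomial X³ − 4320d²X + 96768d³ over ℚ equals ℚ(√2). (Equivalently, the 2-torsion field ℚ(E[2]) of every quadratic twist E^d : y² = x³ − 4320d²x + 96768d³ of the CM curve E_{8,1} equals ℚ(√2).) -/
open Polynomial

/-- For every nonzero rational `d`, the splitting field inside `ℂ` of
`X³ − 4320d²X + 96768d³` over `ℚ` (i.e. the 2-torsion field of the quadratic twist
`E^d : y² = x³ − 4320d²x + 96768d³` of the CM curve `E_{8,1}`) equals `ℚ(√2)`. -/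
theorem splittingField_two_division_poly_twist_E_8_1 (d : ℚ) (hd : d ≠ 0) :
    IntermediateField.adjoin ℚ
        (((X : ℚ[X]) ^ 3 - C (4320 * d ^ 2) * X + C (96768 * d ^ 3)).rootSet ℂ) =
      IntermediateField.adjoin ℚ {(Real.sqrt 2 : ℂ)} := by
  have hs : (Real.sqrt 2 : ℂ) ^ 2 = 2 := by
    norm_cast
    rw [Real.sq_sqrt] ; norm_num
  set s : ℂ := (Real.sqrt 2 : ℂ) with hsdef
  have hd' : (d : ℂ) ≠ 0 := by exact_mod_cast hd
  have hp : ((X : ℚ[X]) ^ 3 - C (4320 * d ^ 2) * X + C (96768 * d ^ 3)) ≠ 0 := by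
    intro h
    have h3 := congrArg (fun q => Polynomial.coeff q 3) h
    simp only [coeff_add, coeff_sub, coeff_X_pow, coeff_C_mul, coeff_C, coeff_zero] at h3
    norm_num [coeff_C_mul, coeff_X, coeff_C] at h3
  set K := IntermediateField.adjoin ℚ {s} with hK
  set L := IntermediateField.adjoin ℚ
      (((X : ℚ[X]) ^ 3 - C (4320 * d ^ 2) * X + C (96768 * d ^ 3)).rootSet ℂ) with hL
  have hratK : ∀ q : ℚ, (q : ℂ) ∈ K := fun q => by
    simpa using K.algebraMap_mem q
  have hratL : ∀ q : ℚ, (q : ℂ) ∈ L := fun q => by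
    simpa using L.algebraMap_mem q
  have hsK : s ∈ K := IntermediateField.subset_adjoin ℚ _ rfl
  apply le_antisymm
  · rw [IntermediateField.adjoin_le_iff]
    intro x hx
    rw [Polynomial.mem_rootSet] at hx
    have h0 : x ^ 3 - (4320 * (d:ℂ) ^ 2) * x + 96768 * (d:ℂ) ^ 3 = 0 := by
      have := hx.2
      simp only [map_add, map_sub, map_mul, map_pow, aeval_X, aeval_C, eq_ratCast] at this
      push_cast at this
      linear_combination this
    have heval : (x - 48 * d) * (x - (-24 + 36 * s) * d) * (x - (-24 - 36 * s) * d) = 0 := by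
      linear_combination h0 + (-1296 * (d:ℂ)^2 * x + 62208 * (d:ℂ)^3) * hs
    have hdK : (d : ℂ) ∈ K := hratK d
    rcases mul_eq_zero.mp heval with h | h
    · rcases mul_eq_zero.mp h with h | h
      · have hx' : x = 48 * d := sub_eq_zero.mp h
        rw [hx']
        exact K.mul_mem (by simpa using hratK 48) hdK
      · have hx' : x = (-24 + 36 * s) * d := sub_eq_zero.mp h
        rw [hx']
        exact K.mul_mem (K.add_mem (K.neg_mem (by simpa using hratK 24)) (K.mul_mem (by simpa using hratK 36) hsK)) hdK
    · have hx' : x = (-24 - 36 * s) * d := sub_eq_zero.mp h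
      rw [hx']
      exact K.mul_mem (K.sub_mem (K.neg_mem (by simpa using hratK 24)) (K.mul_mem (by simpa using hratK 36) hsK)) hdK
  · rw [IntermediateField.adjoin_le_iff]
    rintro x rfl
    have hbroot : ((-24 + 36 * s) * d) ∈
        (((X : ℚ[X]) ^ 3 - C (4320 * d ^ 2) * X + C (96768 * d ^ 3)).rootSet ℂ) := by
      rw [Polynomial.mem_rootSet]
      refine ⟨hp, ?_⟩
      simp only [map_add, map_sub, map_mul, map_pow, aeval_X, aeval_C, eq_ratCast]
      push_cast
      linear_combination ((d:ℂ)^3 * (46656 * s - 93312)) * hs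
    have hbL : ((-24 + 36 * s) * d) ∈ L := IntermediateField.subset_adjoin ℚ _ hbroot
    have hseq : s = (((-24 + 36 * s) * d) + 24 * d) / (36 * d) := by
      field_simp
      ring
    rw [hseq]
    exact L.div_mem (L.add_mem hbL (L.mul_mem (by simpa using hratL 24) (hratL d)))
      (L.mul_mem (by simpa using hratL 36) (hratL d))
end

section
/- Let d be a nonzero rational number. The splitting field inside ℂ of the cubic polynomial X³ − 595d²X + 5586d³ over ℚ equals ℚ(√7). (Equivalently, the 2-torsion field ℚ(E[2]) of every quadratic twist E^d : y² = x³ − 595d²x + 5586d³ of the CM curve E_{7,2} equals ℚ(√7).) -/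
open Polynomial

/-- For every nonzero rational `d`, the splitting field inside `ℂ` of
`X³ − 595d²X + 5586d³` over `ℚ` (i.e. the 2-torsion field of the quadratic twist
`E^d : y² = x³ − 595d²x + 5586d³` of the CM curve `E_{7,2}`) equals `ℚ(√7)`. -/
theorem splittingField_two_division_poly_twist_E_7_2 (d : ℚ) (hd : d ≠ 0) :
    IntermediateField.adjoin ℚ
        (((X : ℚ[X]) ^ 3 - C (595 * d ^ 2) * X + C (5586 * d ^ 3)).rootSet ℂ) =
      IntermediateField.adjoin ℚ {(Real.sqrt 7 : ℂ)} := by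
  set s : ℂ := (Real.sqrt 7 : ℂ) with hs
  set p : ℚ[X] := (X : ℚ[X]) ^ 3 - C (595 * d ^ 2) * X + C (5586 * d ^ 3) with hp
  have hp0 : p ≠ 0 := by
    intro h
    have := congrArg (fun q => Polynomial.coeff q 3) h
    simp only [hp, coeff_add, coeff_sub, coeff_X_pow, coeff_C_mul, coeff_X, coeff_C,
      coeff_zero] at this
    norm_num at this
  have hs2 : s ^ 2 = 7 := by
    rw [hs]
    have : (Real.sqrt 7) ^ 2 = 7 := Real.sq_sqrt (by norm_num)
    exact_mod_cast this
  have hdc : (d : ℂ) ≠ 0 := by exact_mod_cast hd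
  apply le_antisymm
  · rw [IntermediateField.adjoin_le_iff]
    intro x hx
    rw [Polynomial.mem_rootSet] at hx
    have hx' : x ^ 3 - 595 * (d:ℂ) ^ 2 * x + 5586 * (d:ℂ) ^ 3 = 0 := by
      have h2 := hx.2
      rw [hp] at h2
      simp only [map_add, map_sub, map_mul, map_pow, aeval_X, aeval_C, eq_ratCast] at h2
      push_cast at h2
      linear_combination h2
    have hfac : (x - 14 * d) * (x - ((-7 + 8 * s) * d)) * (x - ((-7 - 8 * s) * d)) = 0 := by
      linear_combination hx' + (896 * (d:ℂ) ^ 3 - 64 * (d:ℂ) ^ 2 * x) * hs2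
    have hsK : s ∈ IntermediateField.adjoin ℚ {s} :=
      IntermediateField.subset_adjoin ℚ {s} rfl
    have key : ∀ a b : ℚ, ((a : ℂ) + (b : ℂ) * s) ∈ IntermediateField.adjoin ℚ {s} := by
      intro a b
      refine add_mem ?_ (mul_mem ?_ hsK)
      · simpa using (IntermediateField.adjoin ℚ {s}).algebraMap_mem a
      · simpa using (IntermediateField.adjoin ℚ {s}).algebraMap_mem b
    rcases mul_eq_zero.mp hfac with h | h
    · rcases mul_eq_zero.mp h with h | h
      · rw [sub_eq_zero.mp h]
        have heq : (14 : ℂ) * d = ((14 * d : ℚ) : ℂ) + ((0 : ℚ) : ℂ) * s := by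
          push_cast; ring
        rw [heq]; exact key _ _
      · rw [sub_eq_zero.mp h]
        have heq : ((-7 : ℂ) + 8 * s) * d = ((-7 * d : ℚ) : ℂ) + ((8 * d : ℚ) : ℂ) * s := by
          push_cast; ring
        rw [heq]; exact key _ _
    · rw [sub_eq_zero.mp h]
      have heq : ((-7 : ℂ) - 8 * s) * d = ((-7 * d : ℚ) : ℂ) + ((-8 * d : ℚ) : ℂ) * s := by
        push_cast; ring
      rw [heq]; exact key _ _
  · refine IntermediateField.adjoin_le_iff.mpr (Set.singleton_subset_iff.mpr ?_)
    have hb : ((-7 + 8 * s) * d) ∈ p.rootSet ℂ := by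
      rw [Polynomial.mem_rootSet]
      refine ⟨hp0, ?_⟩
      rw [hp]
      simp only [map_add, map_sub, map_mul, map_pow, aeval_X, aeval_C, eq_ratCast]
      push_cast
      linear_combination (512 * (d:ℂ)^3 * s - 1344 * (d:ℂ)^3) * hs2
    have hbK : ((-7 + 8 * s) * d) ∈ IntermediateField.adjoin ℚ (p.rootSet ℂ) :=
      IntermediateField.subset_adjoin ℚ _ hb
    have hseq : s = ((1 / (8 * d) : ℚ) : ℂ) * ((-7 + 8 * s) * d) + ((7 / 8 : ℚ) : ℂ) := by
      push_cast
      field_simp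
      ring
    rw [hseq]
    refine add_mem (mul_mem ?_ hbK) ?_
    · simpa using (IntermediateField.adjoin ℚ (p.rootSet ℂ)).algebraMap_mem (1 / (8 * d))
    · simpa using (IntermediateField.adjoin ℚ (p.rootSet ℂ)).algebraMap_mem (7 / 8)
end

section
/- Let d be a nonzero rational number and let E be the elliptic curve over ℚ given by y² = x³ − 9504d²x + 365904d³ (a quadratic twist of the CM curve E_{11,1}). Let F be a number field that is Galois over ℚ and such that √−11 ∉ F. Then E(F)[2] is trivial: the only point P ∈ E(F) with 2P = O is P = O. -/
open WeierstrassCurve WeierstrassCurve.Affine Polynomial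

private lemma no_rat_root'11 (r : ℚ) : r ^ 3 - 9504 * r + 365904 ≠ 0 := by
  intro h
  have hint : IsIntegral ℤ r := by
    refine ⟨X ^ 3 + C (-9504) * X + C 365904, ?_, ?_⟩
    · monicity!
    · simp only [eval₂_add, eval₂_mul, eval₂_X_pow, eval₂_C, eval₂_X]
      simp only [algebraMap_int_eq, eq_intCast]
      push_cast
      linear_combination h
  obtain ⟨n, hn⟩ := IsIntegrallyClosed.isIntegral_iff.mp hint
  have hn' : ((n : ℤ) : ℚ) = r := hn
  have hz' : n ^ 3 - 9504 * n + 365904 = 0 := by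
    have : ((n : ℚ)) ^ 3 - 9504 * n + 365904 = 0 := by rw [hn']; exact h
    exact_mod_cast this
  have h5 : ((n : ZMod 5) ^ 3 - 9504 * (n : ZMod 5) + 365904 = 0) := by
    exact_mod_cast congrArg (Int.cast : ℤ → ZMod 5) hz'
  have : ∀ z : ZMod 5, ¬ (z ^ 3 - 9504 * z + 365904 = 0) := by decide
  exact this _ h5

private lemma cubic_irred'11 : Irreducible (X ^ 3 + C (-9504 : ℚ) * X + C 365904) := by
  have hd : (X ^ 3 + C (-9504 : ℚ) * X + C 365904).natDegree = 3 := by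
    compute_degree!
  rw [irreducible_iff_roots_eq_zero_of_degree_le_three (by omega) (by omega)]
  rw [Multiset.eq_zero_iff_forall_notMem]
  intro r hr
  rw [mem_roots, IsRoot] at hr
  · simp only [eval_add, eval_mul, eval_pow, eval_X, eval_C] at hr
    exact no_rat_root'11 r (by linear_combination hr)
  · intro h0
    rw [h0] at hd; simp at hd

private lemma disc_identity'11 {F : Type} [Field F] (a b c p q : F)
    (h1 : a + b + c = 0) (h2 : a * b + a * c + b * c = p) (h3 : a * b * c = q) :
    ((a - b) * (a - c) * (b - c)) ^ 2 = -4 * p ^ 3 - 27 * q ^ 2 := by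
  subst h2; subst h3
  have hc : c = -(a + b) := by linear_combination h1
  subst hc
  ring

private lemma sqrt_neg11'11 {F : Type} [Field F] [NumberField F] [IsGalois ℚ F]
    (t : F) (ht : t ^ 3 - 9504 * t + 365904 = 0) : ∃ x : F, x ^ 2 = -11 := by
  set Cp : ℚ[X] := X ^ 3 + C (-9504) * X + C 365904 with hCp
  have hmono : Cp.Monic := by rw [hCp]; monicity!
  have haev : aeval t Cp = 0 := by
    simp only [hCp, map_add, map_mul, map_pow, aeval_X, aeval_C, map_neg, map_ofNat]
    linear_combination ht
  have hmin : minpoly ℚ t = Cp :=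
    (minpoly.eq_of_irreducible_of_monic cubic_irred'11 haev hmono).symm
  have hsplits : Splits (Cp.map (algebraMap ℚ F)) := hmin ▸ Normal.splits inferInstance t
  have hdeg : Cp.natDegree = 3 := by rw [hCp]; compute_degree!
  have hcard : (Cp.map (algebraMap ℚ F)).roots.card = 3 := by
    rw [splits_iff_card_roots.mp hsplits, natDegree_map, hdeg]
  obtain ⟨a, b, c, habc⟩ := Multiset.card_eq_three.mp hcard
  have hfact : Cp.map (algebraMap ℚ F) = (X - C a) * ((X - C b) * ((X - C c) * 1)) := by
    have := hsplits.eq_prod_roots_of_monic (hmono.map (algebraMap ℚ F))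
    rw [this, habc]
    simp [Multiset.map_cons, Multiset.prod_cons]
  have heq : ∀ z : F, z ^ 3 - 9504 * z + 365904 = (z - a) * ((z - b) * (z - c)) := by
    intro z
    have h1 := congrArg (eval z) hfact
    rw [eval_map] at h1
    simp only [hCp, eval₂_add, eval₂_mul, eval₂_X_pow, eval₂_C, eval₂_X, eval₂_neg, eval₂_ofNat,
      map_neg, map_ofNat, eval_mul, eval_sub, eval_X, eval_C, eval_one, mul_one] at h1
    linear_combination h1
  have he3 : a * b * c = -365904 := by linear_combination heq 0
  have he2 : a * b + a * c + b * c = -9504 := by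
    linear_combination (-1/2 : F) * heq 1 + (1/2 : F) * heq (-1)
  have he1 : a + b + c = 0 := by
    linear_combination (1/2 : F) * heq 1 + (1/2 : F) * heq (-1) - heq 0
  have hs : ((a - b) * (a - c) * (b - c)) ^ 2 = -4 * (-9504 : F) ^ 3 - 27 * (-365904 : F) ^ 2 :=
    disc_identity'11 a b c _ _ he1 he2 he3
  refine ⟨(a - b) * (a - c) * (b - c) / 128304, ?_⟩
  rw [div_pow, hs]
  norm_num

open Classical in
/-- For a nonzero rational `d`, the quadratic twist `E^d : y² = x³ − 9504d²x + 365904d³`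
of the CM curve `E_{11,1}` has trivial 2-torsion over any Galois number field `F`
not containing `√−11`. -/
theorem twoTorsion_trivial_twist_E_11_1 (d : ℚ) (hd : d ≠ 0)
    (E : WeierstrassCurve ℚ) (hE : E = ⟨0, 0, 0, -9504 * d ^ 2, 365904 * d ^ 3⟩)
    (F : Type) [Field F] [NumberField F] [IsGalois ℚ F]
    (hF : ¬∃ x : F, x ^ 2 = -11)
    (P : (E.baseChange F).toAffine.Point) (hP : 2 • P = 0) : P = 0 := by
  rcases P with _ | @⟨x, y, h⟩
  · rfl
  · exfalso
    rw [two_smul] at hP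
    by_cases hy : y = ((E.baseChange F).toAffine).negY x y
    · -- y = -y hence y = 0
      have ha1 : ((E.baseChange F).toAffine).a₁ = 0 := by
        subst hE; simp [WeierstrassCurve.baseChange, map_a₁]
      have ha3 : ((E.baseChange F).toAffine).a₃ = 0 := by
        subst hE; simp [WeierstrassCurve.baseChange, map_a₃]
      rw [negY, ha1, ha3] at hy
      have hy0 : y = 0 := by
        have : 2 * y = 0 := by linear_combination hy
        have h2 : (2 : F) ≠ 0 := two_ne_zero
        exact (mul_eq_zero.mp this).resolve_left h2
      have heq := h.1
      rw [equation_iff] at heq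
      have ha2 : ((E.baseChange F).toAffine).a₂ = 0 := by
        subst hE; simp [WeierstrassCurve.baseChange, map_a₂]
      have ha4 : ((E.baseChange F).toAffine).a₄ = algebraMap ℚ F (-9504 * d ^ 2) := by
        subst hE; simp [WeierstrassCurve.baseChange, map_a₄]
      have ha6 : ((E.baseChange F).toAffine).a₆ = algebraMap ℚ F (365904 * d ^ 3) := by
        subst hE; simp [WeierstrassCurve.baseChange, map_a₆]
      rw [ha1, ha2, ha3, ha4, ha6, hy0] at heq
      set dF : F := algebraMap ℚ F d with hdF
      have hdF0 : dF ≠ 0 := by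
        simp [hdF, hd]
      have hx : x ^ 3 - 9504 * dF ^ 2 * x + 365904 * dF ^ 3 = 0 := by
        have h4 : algebraMap ℚ F (-9504 * d ^ 2) = -9504 * dF ^ 2 := by
          rw [map_mul, map_pow, map_neg, map_ofNat, hdF]
        have h6 : algebraMap ℚ F (365904 * d ^ 3) = 365904 * dF ^ 3 := by
          rw [map_mul, map_pow, map_ofNat, hdF]
        rw [h4, h6] at heq
        linear_combination -heq
      have ht : (x / dF) ^ 3 - 9504 * (x / dF) + 365904 = 0 := by
        field_simp
        linear_combination hx
      exact hF (sqrt_neg11'11 (x / dF) ht)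
    · rw [Point.add_self_of_Y_ne hy] at hP
      exact Point.some_ne_zero _ hP
end

section
/- Let E be the elliptic curve over ℚ given by y² = x³ − 9504x + 365904 (the CM curve E_{11,1}) and let ζ = e^{2πi/11}. There exists a point P = (x₀, y₀) ∈ E(ℂ) of exact order 11 such that ℚ(x₀, y₀) = ℚ(ζ + ζ⁻¹), the maximal real subfield of the 11th cyclotomic field. -/
open WeierstrassCurve WeierstrassCurve.Affine

private lemma some_congr {F : Type*} [Field F] {W : WeierstrassCurve.Affine F}
    {x₁ y₁ x₂ y₂ : F} (hx : x₁ = x₂) (hy : y₁ = y₂)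
    {h₁ : W.Nonsingular x₁ y₁} {h₂ : W.Nonsingular x₂ y₂} :
    Point.some _ _ h₁ = Point.some _ _ h₂ := by subst hx; subst hy; rfl

set_option maxHeartbeats 4000000 in
/-- The CM curve `E_{11,1} : y² = x³ − 9504x + 365904` has a point `P = (x₀, y₀)` of
exact order `11` whose coordinates generate the maximal real subfield
`ℚ(ζ + ζ⁻¹)` of the 11th cyclotomic field, where `ζ = e^{2πi/11}`. -/
theorem eleven_torsion_field_E_11_1
    (E : WeierstrassCurve ℚ) (hE : E = ⟨0, 0, 0, -9504, 365904⟩)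
    (ζ : ℂ) (hζ : ζ = Complex.exp (2 * Real.pi * Complex.I / 11)) :
    ∃ (x₀ y₀ : ℂ) (h : (E.baseChange ℂ).toAffine.Nonsingular x₀ y₀),
      addOrderOf (Point.some x₀ y₀ h : (E.baseChange ℂ).toAffine.Point) = 11 ∧
      IntermediateField.adjoin ℚ {x₀, y₀} = IntermediateField.adjoin ℚ {ζ + ζ⁻¹} := by
  subst hE
  have hζ0 : ζ ≠ 0 := by rw [hζ]; exact Complex.exp_ne_zero _
  have h11 : ζ ^ 11 = 1 := by
    rw [hζ, ← Complex.exp_nat_mul]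
    rw [show (11 : ℕ) * (2 * ↑Real.pi * Complex.I / 11) = 2 * ↑Real.pi * Complex.I by
      push_cast; ring]
    exact Complex.exp_two_pi_mul_I
  have hζ1 : ζ ≠ 1 := by
    rw [hζ]
    intro h1
    obtain ⟨n, hn⟩ := Complex.exp_eq_one_iff.mp h1
    have hpi : (Real.pi : ℂ) ≠ 0 := by exact_mod_cast Real.pi_ne_zero
    have hne : (2 * (Real.pi : ℂ) * Complex.I) ≠ 0 := by
      simp [hpi, Complex.I_ne_zero]
    have h2 : ((n : ℂ) * 11) = 1 := by
      field_simp at hn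
      apply mul_left_cancel₀ hne
      linear_combination -(2 * (Real.pi : ℂ) * Complex.I) * hn
    have h3 : ((n * 11 : ℤ) : ℂ) = ((1 : ℤ) : ℂ) := by push_cast; linear_combination h2
    have h4 : (n * 11 : ℤ) = 1 := by exact_mod_cast h3
    omega
  have hinv : ζ⁻¹ = ζ ^ 10 :=
    inv_eq_of_mul_eq_one_right (by linear_combination h11)
  have hsum : ζ^10 + ζ^9 + ζ^8 + ζ^7 + ζ^6 + ζ^5 + ζ^4 + ζ^3 + ζ^2 + ζ + 1 = 0 := by
    rcases mul_eq_zero.mp (show (ζ - 1) * (ζ^10 + ζ^9 + ζ^8 + ζ^7 + ζ^6 + ζ^5 + ζ^4 + ζ^3 + ζ^2 + ζ + 1) = 0 by linear_combination h11) with h | h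
    · exact absurd (by linear_combination h) hζ1
    · exact h
  set c : ℂ := ζ + ζ⁻¹ with hc
  have hq : c^5 + c^4 - 4*c^3 - 3*c^2 + 3*c + 1 = 0 := by
    rw [hc, hinv]
    linear_combination (((-2)*ζ + (4)*ζ^2 + (5)*ζ^3 + (1)*ζ^6 + (1)*ζ^7 + (1)*ζ^8 + (1)*ζ^9 + (-2)*ζ^10 + (6)*ζ^11 + (10)*ζ^12 + (1)*ζ^17 + (1)*ζ^18 + (1)*ζ^19 + (4)*ζ^20 + (10)*ζ^21 + (1)*ζ^28 + (1)*ζ^29 + (5)*ζ^30 + (1)*ζ^39)) * h11 + (1) * hsum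
  set W := ((⟨0, 0, 0, -9504, 365904⟩ : WeierstrassCurve ℚ).baseChange ℂ).toAffine with hW
  have ha1 : W.a₁ = 0 := by simp [hW, WeierstrassCurve.map]
  have ha2 : W.a₂ = 0 := by simp [hW, WeierstrassCurve.map]
  have ha3 : W.a₃ = 0 := by simp [hW, WeierstrassCurve.map]
  have ha4 : W.a₄ = -9504 := by simp [hW, WeierstrassCurve.map]
  have ha6 : W.a₆ = 365904 := by simp [hW, WeierstrassCurve.map]
  -- nonzeroness facts
  have hy0ne : ((-756) + (432)*c + (1080)*c^2 + (-432)*c^3 + (-432)*c^4) ≠ 0 := by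
    intro h
    exact one_ne_zero (α := ℂ) (by linear_combination (((-5:ℂ)/1188) + ((-1:ℂ)/99)*c + ((1:ℂ)/594)*c^2 + ((1:ℂ)/297)*c^3) * h + (((-24:ℂ)/11) + ((8:ℂ)/11)*c + ((16:ℂ)/11)*c^2) * hq)
  have hy2ne : ((2484) + (-648)*c + (-2160)*c^2 + (216)*c^3 + (432)*c^4) ≠ 0 := by
    intro h
    exact one_ne_zero (α := ℂ) (by linear_combination (((1:ℂ)/1188) + ((1:ℂ)/594)*c + ((-1:ℂ)/594)*c^3) * h + (((-12:ℂ)/11) + ((-4:ℂ)/11)*c + ((8:ℂ)/11)*c^2) * hq)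
  have hx40 : (((96) + (108)*c + (72)*c^2 + (-36)*c^3 + (-36)*c^4) : ℂ) ≠ ((-84) + (36)*c + (180)*c^2 + (-36)*c^4) := by
    intro h
    exact one_ne_zero (α := ℂ) (by linear_combination (((7:ℂ)/396) + ((5:ℂ)/198)*c + ((-5:ℂ)/99)*c^2 + ((-1:ℂ)/198)*c^3 + ((5:ℂ)/396)*c^4) * h + (((-24:ℂ)/11) + ((8:ℂ)/11)*c + ((5:ℂ)/11)*c^2) * hq)
  have hx50 : (((24) + (-72)*c + (108)*c^2 + (-36)*c^4) : ℂ) ≠ ((-84) + (36)*c + (180)*c^2 + (-36)*c^4) := by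
    intro h
    exact one_ne_zero (α := ℂ) (by linear_combination (((-13:ℂ)/396)*c + ((-2:ℂ)/99)*c^2 + ((1:ℂ)/99)*c^3 + ((1:ℂ)/132)*c^4) * h + ((1) + ((6:ℂ)/11)*c) * hq)
  -- nonsingularity of P
  have hP : W.Nonsingular ((-84) + (36)*c + (180)*c^2 + (-36)*c^4) ((-756) + (432)*c + (1080)*c^2 + (-432)*c^3 + (-432)*c^4) := by
    rw [nonsingular_iff, equation_iff]
    simp only [ha1, ha2, ha3, ha4, ha6]
    constructor
    · linear_combination ((-1073088)*c + (1586304)*c^3 + (279936)*c^4 + (-466560)*c^5 + (-46656)*c^6 + (46656)*c^7) * hq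
    · right
      intro h
      exact hy0ne (by linear_combination h / 2)
  -- negY hypotheses
  have hyne0 : (((-756) + (432)*c + (1080)*c^2 + (-432)*c^3 + (-432)*c^4) : ℂ) ≠ W.negY ((-84) + (36)*c + (180)*c^2 + (-36)*c^4) ((-756) + (432)*c + (1080)*c^2 + (-432)*c^3 + (-432)*c^4) := by
    simp only [negY, ha1, ha3]
    intro h
    exact hy0ne (by linear_combination h / 2)
  -- slopes
  have hs1 : W.slope ((-84) + (36)*c + (180)*c^2 + (-36)*c^4) ((-84) + (36)*c + (180)*c^2 + (-36)*c^4) ((-756) + (432)*c + (1080)*c^2 + (-432)*c^3 + (-432)*c^4) ((-756) + (432)*c + (1080)*c^2 + (-432)*c^3 + (-432)*c^4) = ((-6) + (6)*c + (18)*c^2 + (-6)*c^3 + (-6)*c^4) := by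
    rw [slope_of_Y_ne rfl hyne0, div_eq_iff (sub_ne_zero.mpr hyne0)]
    simp only [negY, ha1, ha2, ha3, ha4]
    linear_combination ((2592) + (-11664)*c + (-9072)*c^2 + (-1296)*c^3) * hq
  have hx2 : W.addX ((-84) + (36)*c + (180)*c^2 + (-36)*c^4) ((-84) + (36)*c + (180)*c^2 + (-36)*c^4) (W.slope ((-84) + (36)*c + (180)*c^2 + (-36)*c^4) ((-84) + (36)*c + (180)*c^2 + (-36)*c^4) ((-756) + (432)*c + (1080)*c^2 + (-432)*c^3 + (-432)*c^4) ((-756) + (432)*c + (1080)*c^2 + (-432)*c^3 + (-432)*c^4)) = ((168) + (-180)*c + (-252)*c^2 + (72)*c^3 + (72)*c^4) := by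
    rw [hs1]; simp only [addX, ha1, ha2]
    linear_combination ((36) + (-72)*c + (36)*c^2 + (36)*c^3) * hq
  have hy2 : W.addY ((-84) + (36)*c + (180)*c^2 + (-36)*c^4) ((-84) + (36)*c + (180)*c^2 + (-36)*c^4) ((-756) + (432)*c + (1080)*c^2 + (-432)*c^3 + (-432)*c^4) (W.slope ((-84) + (36)*c + (180)*c^2 + (-36)*c^4) ((-84) + (36)*c + (180)*c^2 + (-36)*c^4) ((-756) + (432)*c + (1080)*c^2 + (-432)*c^3 + (-432)*c^4) ((-756) + (432)*c + (1080)*c^2 + (-432)*c^3 + (-432)*c^4)) = ((2484) + (-648)*c + (-2160)*c^2 + (216)*c^3 + (432)*c^4) := by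
    rw [hs1]; simp only [addY, negAddY, addX, negY, ha1, ha2, ha3]
    linear_combination ((-2592)*c + (432)*c^2 + (2160)*c^3 + (-1080)*c^4 + (-864)*c^5 + (432)*c^6 + (216)*c^7) * hq
  have hQ2 : W.Nonsingular ((168) + (-180)*c + (-252)*c^2 + (72)*c^3 + (72)*c^4) ((2484) + (-648)*c + (-2160)*c^2 + (216)*c^3 + (432)*c^4) := by
    rw [← hx2, ← hy2]; exact nonsingular_add hP hP (fun h => hyne0 h.2)
  have e1 : Point.some _ _ hP + Point.some _ _ hP = Point.some _ _ hQ2 := by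
    rw [Point.add_self_of_Y_ne hyne0]; exact some_congr hx2 hy2
  -- double again
  have hyne2 : (((2484) + (-648)*c + (-2160)*c^2 + (216)*c^3 + (432)*c^4) : ℂ) ≠ W.negY ((168) + (-180)*c + (-252)*c^2 + (72)*c^3 + (72)*c^4) ((2484) + (-648)*c + (-2160)*c^2 + (216)*c^3 + (432)*c^4) := by
    simp only [negY, ha1, ha3]
    intro h
    exact hy2ne (by linear_combination h / 2)
  have hs2 : W.slope ((168) + (-180)*c + (-252)*c^2 + (72)*c^3 + (72)*c^4) ((168) + (-180)*c + (-252)*c^2 + (72)*c^3 + (72)*c^4) ((2484) + (-648)*c + (-2160)*c^2 + (216)*c^3 + (432)*c^4) ((2484) + (-648)*c + (-2160)*c^2 + (216)*c^3 + (432)*c^4) = ((24) + (-30)*c^2 + (6)*c^4) := by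
    rw [slope_of_Y_ne rfl hyne2, div_eq_iff (sub_ne_zero.mpr hyne2)]
    simp only [negY, ha1, ha2, ha3, ha4]
    linear_combination ((-44064) + (-18144)*c + (18144)*c^2 + (10368)*c^3) * hq
  have hx4 : W.addX ((168) + (-180)*c + (-252)*c^2 + (72)*c^3 + (72)*c^4) ((168) + (-180)*c + (-252)*c^2 + (72)*c^3 + (72)*c^4) (W.slope ((168) + (-180)*c + (-252)*c^2 + (72)*c^3 + (72)*c^4) ((168) + (-180)*c + (-252)*c^2 + (72)*c^3 + (72)*c^4) ((2484) + (-648)*c + (-2160)*c^2 + (216)*c^3 + (432)*c^4) ((2484) + (-648)*c + (-2160)*c^2 + (216)*c^3 + (432)*c^4)) = ((96) + (108)*c + (72)*c^2 + (-36)*c^3 + (-36)*c^4) := by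
    rw [hs2]; simp only [addX, ha1, ha2]
    linear_combination ((144) + (-180)*c + (-36)*c^2 + (36)*c^3) * hq
  have hy4 : W.addY ((168) + (-180)*c + (-252)*c^2 + (72)*c^3 + (72)*c^4) ((168) + (-180)*c + (-252)*c^2 + (72)*c^3 + (72)*c^4) ((2484) + (-648)*c + (-2160)*c^2 + (216)*c^3 + (432)*c^4) (W.slope ((168) + (-180)*c + (-252)*c^2 + (72)*c^3 + (72)*c^4) ((168) + (-180)*c + (-252)*c^2 + (72)*c^3 + (72)*c^4) ((2484) + (-648)*c + (-2160)*c^2 + (216)*c^3 + (432)*c^4) ((2484) + (-648)*c + (-2160)*c^2 + (216)*c^3 + (432)*c^4)) = ((-324) + (-2376)*c + (-1296)*c^2 + (864)*c^3 + (432)*c^4) := by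
    rw [hs2]; simp only [addY, negAddY, addX, negY, ha1, ha2, ha3]
    linear_combination ((-3888) + (1728)*c + (5184)*c^2 + (-5616)*c^3 + (-1944)*c^4 + (2160)*c^5 + (216)*c^6 + (-216)*c^7) * hq
  have hQ4 : W.Nonsingular ((96) + (108)*c + (72)*c^2 + (-36)*c^3 + (-36)*c^4) ((-324) + (-2376)*c + (-1296)*c^2 + (864)*c^3 + (432)*c^4) := by
    rw [← hx4, ← hy4]; exact nonsingular_add hQ2 hQ2 (fun h => hyne2 h.2)
  have e2 : Point.some _ _ hQ2 + Point.some _ _ hQ2 = Point.some _ _ hQ4 := by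
    rw [Point.add_self_of_Y_ne hyne2]; exact some_congr hx4 hy4
  -- P4 + P = P5
  have hs3 : W.slope ((96) + (108)*c + (72)*c^2 + (-36)*c^3 + (-36)*c^4) ((-84) + (36)*c + (180)*c^2 + (-36)*c^4) ((-324) + (-2376)*c + (-1296)*c^2 + (864)*c^3 + (432)*c^4) ((-756) + (432)*c + (1080)*c^2 + (-432)*c^3 + (-432)*c^4) = ((-24)*c + (6)*c^3) := by
    rw [slope_of_X_ne hx40, div_eq_iff (sub_ne_zero.mpr hx40)]
    linear_combination ((432) + (216)*c) * hq
  have hx5 : W.addX ((96) + (108)*c + (72)*c^2 + (-36)*c^3 + (-36)*c^4) ((-84) + (36)*c + (180)*c^2 + (-36)*c^4) (W.slope ((96) + (108)*c + (72)*c^2 + (-36)*c^3 + (-36)*c^4) ((-84) + (36)*c + (180)*c^2 + (-36)*c^4) ((-324) + (-2376)*c + (-1296)*c^2 + (864)*c^3 + (432)*c^4) ((-756) + (432)*c + (1080)*c^2 + (-432)*c^3 + (-432)*c^4)) = ((24) + (-72)*c + (108)*c^2 + (-36)*c^4) := by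
    rw [hs3]; simp only [addX, ha1, ha2]
    linear_combination ((-36) + (36)*c) * hq
  have hy5 : W.addY ((96) + (108)*c + (72)*c^2 + (-36)*c^3 + (-36)*c^4) ((-84) + (36)*c + (180)*c^2 + (-36)*c^4) ((-324) + (-2376)*c + (-1296)*c^2 + (864)*c^3 + (432)*c^4) (W.slope ((96) + (108)*c + (72)*c^2 + (-36)*c^3 + (-36)*c^4) ((-84) + (36)*c + (180)*c^2 + (-36)*c^4) ((-324) + (-2376)*c + (-1296)*c^2 + (864)*c^3 + (432)*c^4) ((-756) + (432)*c + (1080)*c^2 + (-432)*c^3 + (-432)*c^4)) = ((324) + (864)*c + (-2376)*c^2 + (-216)*c^3 + (648)*c^4) := by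
    rw [hs3]; simp only [addY, negAddY, addX, negY, ha1, ha2, ha3]
    linear_combination ((-1080)*c + (864)*c^2 + (216)*c^3 + (-216)*c^4) * hq
  have hQ5 : W.Nonsingular ((24) + (-72)*c + (108)*c^2 + (-36)*c^4) ((324) + (864)*c + (-2376)*c^2 + (-216)*c^3 + (648)*c^4) := by
    rw [← hx5, ← hy5]; exact nonsingular_add hQ4 hP (fun h => absurd h.1 hx40)
  have e3 : Point.some _ _ hQ4 + Point.some _ _ hP = Point.some _ _ hQ5 := by
    rw [Point.add_of_X_ne hx40]; exact some_congr hx5 hy5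
  -- P5 + P = P6
  have hs4 : W.slope ((24) + (-72)*c + (108)*c^2 + (-36)*c^4) ((-84) + (36)*c + (180)*c^2 + (-36)*c^4) ((324) + (864)*c + (-2376)*c^2 + (-216)*c^3 + (648)*c^4) ((-756) + (432)*c + (1080)*c^2 + (-432)*c^3 + (-432)*c^4) = ((12) + (18)*c + (-24)*c^2 + (-6)*c^3 + (6)*c^4) := by
    rw [slope_of_X_ne hx50, div_eq_iff (sub_ne_zero.mpr hx50)]
    linear_combination ((-216) + (432)*c) * hq
  have hx6 : W.addX ((24) + (-72)*c + (108)*c^2 + (-36)*c^4) ((-84) + (36)*c + (180)*c^2 + (-36)*c^4) (W.slope ((24) + (-72)*c + (108)*c^2 + (-36)*c^4) ((-84) + (36)*c + (180)*c^2 + (-36)*c^4) ((324) + (864)*c + (-2376)*c^2 + (-216)*c^3 + (648)*c^4) ((-756) + (432)*c + (1080)*c^2 + (-432)*c^3 + (-432)*c^4)) = ((24) + (-72)*c + (108)*c^2 + (-36)*c^4) := by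
    rw [hs4]; simp only [addX, ha1, ha2]
    linear_combination ((180) + (-108)*c^2 + (36)*c^3) * hq
  have hy6 : W.addY ((24) + (-72)*c + (108)*c^2 + (-36)*c^4) ((-84) + (36)*c + (180)*c^2 + (-36)*c^4) ((324) + (864)*c + (-2376)*c^2 + (-216)*c^3 + (648)*c^4) (W.slope ((24) + (-72)*c + (108)*c^2 + (-36)*c^4) ((-84) + (36)*c + (180)*c^2 + (-36)*c^4) ((324) + (864)*c + (-2376)*c^2 + (-216)*c^3 + (648)*c^4) ((-756) + (432)*c + (1080)*c^2 + (-432)*c^3 + (-432)*c^4)) = ((-324) + (-864)*c + (2376)*c^2 + (216)*c^3 + (-648)*c^4) := by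
    rw [hs4]; simp only [addY, negAddY, addX, negY, ha1, ha2, ha3]
    linear_combination ((-2160) + (-3240)*c + (5616)*c^2 + (2592)*c^3 + (-4320)*c^4 + (216)*c^5 + (864)*c^6 + (-216)*c^7) * hq
  have hQ6 : W.Nonsingular ((24) + (-72)*c + (108)*c^2 + (-36)*c^4) ((-324) + (-864)*c + (2376)*c^2 + (216)*c^3 + (-648)*c^4) := by
    rw [← hx6, ← hy6]; exact nonsingular_add hQ5 hP (fun h => absurd h.1 hx50)
  have e4 : Point.some _ _ hQ5 + Point.some _ _ hP = Point.some _ _ hQ6 := by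
    rw [Point.add_of_X_ne hx50]; exact some_congr hx6 hy6
  -- P5 + P6 = 0
  have e5 : Point.some _ _ hQ5 + Point.some _ _ hQ6 = 0 := by
    apply Point.add_of_Y_eq rfl
    simp only [negY, ha1, ha3]; ring
  -- order
  haveI : Fact (Nat.Prime 11) := ⟨by norm_num⟩
  have s2P : (2 : ℕ) • (Point.some _ _ hP : W.Point) = Point.some _ _ hQ2 := by
    rw [two_nsmul, e1]
  have s4P : (4 : ℕ) • (Point.some _ _ hP : W.Point) = Point.some _ _ hQ4 := by
    have h := add_nsmul (Point.some _ _ hP : W.Point) 2 2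
    rw [s2P, e2] at h; simpa using h
  have s5P : (5 : ℕ) • (Point.some _ _ hP : W.Point) = Point.some _ _ hQ5 := by
    have h := add_nsmul (Point.some _ _ hP : W.Point) 4 1
    rw [one_nsmul, s4P, e3] at h; simpa using h
  have s6P : (6 : ℕ) • (Point.some _ _ hP : W.Point) = Point.some _ _ hQ6 := by
    have h := add_nsmul (Point.some _ _ hP : W.Point) 5 1
    rw [one_nsmul, s5P, e4] at h; simpa using h
  have s11P : (11 : ℕ) • (Point.some _ _ hP : W.Point) = 0 := by
    have h := add_nsmul (Point.some _ _ hP : W.Point) 5 6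
    rw [s5P, s6P, e5] at h; simpa using h
  refine ⟨_, _, hP, addOrderOf_eq_prime s11P (Point.some_ne_zero hP), ?_⟩
  -- field equality
  have hmem : ∀ (K : IntermediateField ℚ ℂ) (w : ℂ), w ∈ K → ∀ a b d e f : ℚ,
      (a : ℂ) + (b : ℂ) * w + (d : ℂ) * w^2 + (e : ℂ) * w^3 + (f : ℂ) * w^4 ∈ K := by
    intro K w hw a b d e f
    exact add_mem (add_mem (add_mem (add_mem (SubfieldClass.ratCast_mem K a)
      (mul_mem (SubfieldClass.ratCast_mem K b) hw))
      (mul_mem (SubfieldClass.ratCast_mem K d) (pow_mem hw 2)))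
      (mul_mem (SubfieldClass.ratCast_mem K e) (pow_mem hw 3)))
      (mul_mem (SubfieldClass.ratCast_mem K f) (pow_mem hw 4))
  have hcK : c ∈ IntermediateField.adjoin ℚ {c} :=
    IntermediateField.mem_adjoin_simple_self ℚ c
  have hx0L : (((-84) + (36)*c + (180)*c^2 + (-36)*c^4) : ℂ) ∈ IntermediateField.adjoin ℚ {(((-84) + (36)*c + (180)*c^2 + (-36)*c^4) : ℂ), (((-756) + (432)*c + (1080)*c^2 + (-432)*c^3 + (-432)*c^4) : ℂ)} :=
    IntermediateField.subset_adjoin ℚ _ (Set.mem_insert _ _)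
  apply le_antisymm
  · rw [IntermediateField.adjoin_le_iff]
    rintro z hz
    simp only [Set.mem_insert_iff, Set.mem_singleton_iff] at hz
    rcases hz with rfl | rfl
    · rw [show (((-84) + (36)*c + (180)*c^2 + (-36)*c^4) : ℂ) = ((-84 : ℚ) : ℂ) + ((36 : ℚ) : ℂ) * c + ((180 : ℚ) : ℂ) * c^2 + ((0 : ℚ) : ℂ) * c^3 + ((-36 : ℚ) : ℂ) * c^4 by push_cast; ring]
      exact hmem _ c hcK _ _ _ _ _
    · rw [show (((-756) + (432)*c + (1080)*c^2 + (-432)*c^3 + (-432)*c^4) : ℂ) = ((-756 : ℚ) : ℂ) + ((432 : ℚ) : ℂ) * c + ((1080 : ℚ) : ℂ) * c^2 + ((-432 : ℚ) : ℂ) * c^3 + ((-432 : ℚ) : ℂ) * c^4 by push_cast; ring]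
      exact hmem _ c hcK _ _ _ _ _
  · rw [IntermediateField.adjoin_le_iff, Set.singleton_subset_iff]
    have hcval : c = (((-586/81 : ℚ)) : ℂ) + (((269/972 : ℚ)) : ℂ) * ((-84) + (36)*c + (180)*c^2 + (-36)*c^4) + (((-1/1944 : ℚ)) : ℂ) * (((-84) + (36)*c + (180)*c^2 + (-36)*c^4) : ℂ)^2 + (((-71/1539648 : ℚ)) : ℂ) * (((-84) + (36)*c + (180)*c^2 + (-36)*c^4) : ℂ)^3 + (((1/4618944 : ℚ)) : ℂ) * (((-84) + (36)*c + (180)*c^2 + (-36)*c^4) : ℂ)^4 := by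
      push_cast
      linear_combination -(((4) + ((-589:ℂ)/11)*c + ((-42:ℂ)/11)*c^2 + (124)*c^3 + ((142:ℂ)/11)*c^4 + ((-1030:ℂ)/11)*c^5 + ((-129:ℂ)/11)*c^6 + ((357:ℂ)/11)*c^7 + ((40:ℂ)/11)*c^8 + ((-60:ℂ)/11)*c^9 + ((-4:ℂ)/11)*c^10 + ((4:ℂ)/11)*c^11)) * hq
    have hm := hmem _ _ hx0L (-586/81) (269/972) (-1/1944) (-71/1539648) (1/4618944)
    rw [← hcval] at hm
    exact hm
end

section
/- Let E be the elliptic curve over ℚ given by y² = x³ − 2835x − 71442 (the CM curve E_{7,1}) and let ζ = e^{2πi/7}. There exists a point P = (x₀, y₀) ∈ E(ℂ) of exact order 7 such that ℚ(x₀) = ℚ(ζ + ζ⁻¹) and ℚ(x₀, y₀) = ℚ(ζ), the full 7th cyclotomic field; in particular ℚ(√−7) ⊆ ℚ(x₀, y₀). -/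
open WeierstrassCurve WeierstrassCurve.Affine

private lemma some_ext {F : Type*} [Field F] {W : Affine F} {x₁ y₁ x₂ y₂ : F}
    (hx : x₁ = x₂) (hy : y₁ = y₂) (h₁ : W.Nonsingular x₁ y₁) (h₂ : W.Nonsingular x₂ y₂) :
    Point.some _ _ h₁ = Point.some _ _ h₂ := by subst hx; subst hy; rfl

private lemma qmem (K : IntermediateField ℚ ℂ) (q : ℚ) : (q : ℂ) ∈ K := by
  rw [← eq_ratCast (algebraMap ℚ ℂ) q]; exact K.algebraMap_mem q

private lemma polymem (K : IntermediateField ℚ ℂ) {z : ℂ} (hz : z ∈ K) (a b c d e f : ℚ) :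
    (a : ℂ) + (b : ℂ) * z + (c : ℂ) * z ^ 2 + (d : ℂ) * z ^ 3 + (e : ℂ) * z ^ 4 + (f : ℂ) * z ^ 5 ∈ K :=
  add_mem (add_mem (add_mem (add_mem (add_mem (qmem K a) (mul_mem (qmem K b) hz))
    (mul_mem (qmem K c) (pow_mem hz 2))) (mul_mem (qmem K d) (pow_mem hz 3)))
    (mul_mem (qmem K e) (pow_mem hz 4))) (mul_mem (qmem K f) (pow_mem hz 5))

/-- The CM curve `E_{7,1} : y² = x³ − 2835x − 71442` has a point `P = (x₀, y₀)` of
exact order `7` with `ℚ(x₀) = ℚ(ζ + ζ⁻¹)` and `ℚ(x₀, y₀) = ℚ(ζ)`, the full 7th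
cyclotomic field, where `ζ = e^{2πi/7}`; in particular `ℚ(√−7) ⊆ ℚ(x₀, y₀)`. -/
theorem seven_torsion_field_E_7_1
    (E : WeierstrassCurve ℚ) (hE : E = ⟨0, 0, 0, -2835, -71442⟩)
    (ζ : ℂ) (hζ : ζ = Complex.exp (2 * Real.pi * Complex.I / 7)) :
    ∃ (x₀ y₀ : ℂ) (h : (E.baseChange ℂ).toAffine.Nonsingular x₀ y₀),
      addOrderOf (Point.some x₀ y₀ h : (E.baseChange ℂ).toAffine.Point) = 7 ∧
      IntermediateField.adjoin ℚ {x₀} = IntermediateField.adjoin ℚ {ζ + ζ⁻¹} ∧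
      IntermediateField.adjoin ℚ {x₀, y₀} = IntermediateField.adjoin ℚ {ζ} ∧
      ∃ c ∈ IntermediateField.adjoin ℚ {x₀, y₀}, c ^ 2 = (-7 : ℂ) := by
  subst hE
  -- basic facts about ζ
  have hζ7 : ζ ^ 7 = 1 := by
    rw [hζ, ← Complex.exp_nat_mul, show ((7 : ℕ) : ℂ) * (2 * Real.pi * Complex.I / 7) =
      2 * Real.pi * Complex.I by push_cast; ring, Complex.exp_two_pi_mul_I]
  have hζ1 : ζ ≠ 1 := by
    rw [hζ]
    intro h
    rw [Complex.exp_eq_one_iff] at h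
    obtain ⟨n, hn⟩ := h
    have hpi : (Real.pi : ℂ) ≠ 0 := by exact_mod_cast Real.pi_ne_zero
    have h2 : (2 * (Real.pi : ℂ) * Complex.I) * 1 =
        (2 * (Real.pi : ℂ) * Complex.I) * (7 * n) := by
      rw [mul_one]; linear_combination 7 * hn
    have h3 : (1 : ℂ) = 7 * n :=
      mul_left_cancel₀ (mul_ne_zero (mul_ne_zero two_ne_zero hpi) Complex.I_ne_zero) h2
    have h4 : (1 : ℤ) = 7 * n := by exact_mod_cast h3
    omega
  have hΦ : ζ ^ 6 + ζ ^ 5 + ζ ^ 4 + ζ ^ 3 + ζ ^ 2 + ζ + 1 = 0 := by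
    have h : (ζ - 1) * (ζ ^ 6 + ζ ^ 5 + ζ ^ 4 + ζ ^ 3 + ζ ^ 2 + ζ + 1) = 0 := by
      linear_combination hζ7
    rcases mul_eq_zero.mp h with h' | h'
    · exact absurd (by linear_combination h') hζ1
    · exact h'
  have hζinv : ζ⁻¹ = ζ ^ 6 := inv_eq_of_mul_eq_one_left (by linear_combination hζ7)
  -- coefficients of the base-changed curve
  have ha1 : (((⟨0, 0, 0, -2835, -71442⟩ : WeierstrassCurve ℚ).baseChange ℂ).toAffine).a₁ = 0 := by simp
  have ha2 : (((⟨0, 0, 0, -2835, -71442⟩ : WeierstrassCurve ℚ).baseChange ℂ).toAffine).a₂ = 0 := by simp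
  have ha3 : (((⟨0, 0, 0, -2835, -71442⟩ : WeierstrassCurve ℚ).baseChange ℂ).toAffine).a₃ = 0 := by simp
  have ha4 : (((⟨0, 0, 0, -2835, -71442⟩ : WeierstrassCurve ℚ).baseChange ℂ).toAffine).a₄ = -2835 := by
    show algebraMap ℚ ℂ (-2835 : ℚ) = -2835
    rw [eq_ratCast (algebraMap ℚ ℂ) (-2835 : ℚ)]; norm_num
  have ha6 : (((⟨0, 0, 0, -2835, -71442⟩ : WeierstrassCurve ℚ).baseChange ℂ).toAffine).a₆ = -71442 := by
    show algebraMap ℚ ℂ (-71442 : ℚ) = -71442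
    rw [eq_ratCast (algebraMap ℚ ℂ) (-71442 : ℚ)]; norm_num
  have hnegY : ∀ x y : ℂ, (((⟨0, 0, 0, -2835, -71442⟩ : WeierstrassCurve ℚ).baseChange ℂ).toAffine).negY x y = -y := by
    intro x y; rw [negY, ha1, ha3]; ring
  -- nonzeroness facts
  have hyne : ((108) + (216) * ζ + (108) * ζ ^ 2 + (324) * ζ ^ 3 + (-108) * ζ ^ 4 + (108) * ζ ^ 5 : ℂ) ≠ -((108) + (216) * ζ + (108) * ζ ^ 2 + (324) * ζ ^ 3 + (-108) * ζ ^ 4 + (108) * ζ ^ 5 : ℂ) := by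
    intro h
    exact one_ne_zero (α := ℂ) (by linear_combination ((1/1512) + (1/756) * ζ + (-1/1512) * ζ ^ 3 + (1/504) * ζ ^ 4 + (1/756) * ζ ^ 5 : ℂ) * h + ((6/7) + (-10/7) * ζ + (-1/7) * ζ ^ 2 + (1/7) * ζ ^ 3 + (-2/7) * ζ ^ 4 : ℂ) * hΦ)
  have hy2ne : ((-216) * ζ ^ 2 + (-108) * ζ ^ 3 + (108) * ζ ^ 4 + (216) * ζ ^ 5 : ℂ) ≠ -((-216) * ζ ^ 2 + (-108) * ζ ^ 3 + (108) * ζ ^ 4 + (216) * ζ ^ 5 : ℂ) := by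
    intro h
    exact one_ne_zero (α := ℂ) (by linear_combination ((-1/1512) + (-1/756) * ζ + (1/1512) * ζ ^ 2 + (-1/756) * ζ ^ 3 + (-1/504) * ζ ^ 5 : ℂ) * h + ((1) + (-1) * ζ + (-2/7) * ζ ^ 2 + (-3/7) * ζ ^ 3 + (6/7) * ζ ^ 4 : ℂ) * hΦ)
  have h3yne : ((216) + (432) * ζ + (108) * ζ ^ 2 + (216) * ζ ^ 3 + (216) * ζ ^ 4 + (324) * ζ ^ 5 : ℂ) ≠ -((216) + (432) * ζ + (108) * ζ ^ 2 + (216) * ζ ^ 3 + (216) * ζ ^ 4 + (324) * ζ ^ 5 : ℂ) := by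
    intro h
    exact one_ne_zero (α := ℂ) (by linear_combination ((-1/756) + (-1/378) * ζ + (-1/504) * ζ ^ 2 + (-1/504) * ζ ^ 3 + (-1/1512) * ζ ^ 4 + (-1/1512) * ζ ^ 5 : ℂ) * h + ((11/7) + (5/7) * ζ + (8/7) * ζ ^ 2 + (2/7) * ζ ^ 3 + (3/7) * ζ ^ 4 : ℂ) * hΦ)
  have hx23 : ((-9) + (36) * ζ ^ 3 + (36) * ζ ^ 4 : ℂ) ≠ ((-45) + (-36) * ζ ^ 2 + (-36) * ζ ^ 3 + (-36) * ζ ^ 4 + (-36) * ζ ^ 5 : ℂ) := by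
    intro h
    exact one_ne_zero (α := ℂ) (by linear_combination ((1/63) + (1/126) * ζ ^ 2 + (1/84) * ζ ^ 3 + (1/84) * ζ ^ 4 + (1/126) * ζ ^ 5 : ℂ) * h + ((3/7) + (-3/7) * ζ + (-6/7) * ζ ^ 2 + (-5/7) * ζ ^ 3 + (-2/7) * ζ ^ 4 : ℂ) * hΦ)
  have hx9 : ((-45) + (-36) * ζ ^ 2 + (-36) * ζ ^ 3 + (-36) * ζ ^ 4 + (-36) * ζ ^ 5 : ℂ) + 9 ≠ 0 := by
    intro h
    exact one_ne_zero (α := ℂ) (by linear_combination ((-1/36) + (-1/36) * ζ ^ 3 + (-1/36) * ζ ^ 4 : ℂ) * h + ((-1) * ζ ^ 2 + (-1) * ζ ^ 3 : ℂ) * hΦ)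
  -- the points are on the curve
  have heq1 : (((⟨0, 0, 0, -2835, -71442⟩ : WeierstrassCurve ℚ).baseChange ℂ).toAffine).Equation ((-45) + (-36) * ζ ^ 2 + (-36) * ζ ^ 3 + (-36) * ζ ^ 4 + (-36) * ζ ^ 5 : ℂ) ((108) + (216) * ζ + (108) * ζ ^ 2 + (324) * ζ ^ 3 + (-108) * ζ ^ 4 + (108) * ζ ^ 5 : ℂ) := by
    rw [equation_iff, ha1, ha2, ha3, ha4, ha6]
    linear_combination ((46656) + (139968) * ζ ^ 2 + (46656) * ζ ^ 3 + (186624) * ζ ^ 4 + (93312) * ζ ^ 5 + (186624) * ζ ^ 6 + (139968) * ζ ^ 7 + (93312) * ζ ^ 8 + (46656) * ζ ^ 9 : ℂ) * hΦ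
  have heq2 : (((⟨0, 0, 0, -2835, -71442⟩ : WeierstrassCurve ℚ).baseChange ℂ).toAffine).Equation ((-9) + (36) * ζ ^ 3 + (36) * ζ ^ 4 : ℂ) ((-216) * ζ ^ 2 + (-108) * ζ ^ 3 + (108) * ζ ^ 4 + (216) * ζ ^ 5 : ℂ) := by
    rw [equation_iff, ha1, ha2, ha3, ha4, ha6]
    linear_combination ((46656) + (-46656) * ζ + (93312) * ζ ^ 3 + (46656) * ζ ^ 4 + (-93312) * ζ ^ 5 + (-46656) * ζ ^ 6 : ℂ) * hΦ
  have heq3 : (((⟨0, 0, 0, -2835, -71442⟩ : WeierstrassCurve ℚ).baseChange ℂ).toAffine).Equation ((-9) + (36) * ζ ^ 2 + (36) * ζ ^ 5 : ℂ) ((216) + (432) * ζ + (108) * ζ ^ 2 + (216) * ζ ^ 3 + (216) * ζ ^ 4 + (324) * ζ ^ 5 : ℂ) := by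
    rw [equation_iff, ha1, ha2, ha3, ha4, ha6]
    linear_combination ((93312) + (93312) * ζ + (139968) * ζ ^ 2 + (-139968) * ζ ^ 3 + (139968) * ζ ^ 4 + (139968) * ζ ^ 5 + (-139968) * ζ ^ 6 + (46656) * ζ ^ 8 + (-46656) * ζ ^ 9 : ℂ) * hΦ
  have hns : (((⟨0, 0, 0, -2835, -71442⟩ : WeierstrassCurve ℚ).baseChange ℂ).toAffine).Nonsingular ((-45) + (-36) * ζ ^ 2 + (-36) * ζ ^ 3 + (-36) * ζ ^ 4 + (-36) * ζ ^ 5 : ℂ) ((108) + (216) * ζ + (108) * ζ ^ 2 + (324) * ζ ^ 3 + (-108) * ζ ^ 4 + (108) * ζ ^ 5 : ℂ) := by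
    rw [nonsingular_iff, ha1, ha3]
    exact ⟨heq1, Or.inr fun h => hyne (by linear_combination h)⟩
  have hns2 : (((⟨0, 0, 0, -2835, -71442⟩ : WeierstrassCurve ℚ).baseChange ℂ).toAffine).Nonsingular ((-9) + (36) * ζ ^ 3 + (36) * ζ ^ 4 : ℂ) ((-216) * ζ ^ 2 + (-108) * ζ ^ 3 + (108) * ζ ^ 4 + (216) * ζ ^ 5 : ℂ) := by
    rw [nonsingular_iff, ha1, ha3]
    exact ⟨heq2, Or.inr fun h => hy2ne (by linear_combination h)⟩
  have hns3 : (((⟨0, 0, 0, -2835, -71442⟩ : WeierstrassCurve ℚ).baseChange ℂ).toAffine).Nonsingular ((-9) + (36) * ζ ^ 2 + (36) * ζ ^ 5 : ℂ) ((216) + (432) * ζ + (108) * ζ ^ 2 + (216) * ζ ^ 3 + (216) * ζ ^ 4 + (324) * ζ ^ 5 : ℂ) := by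
    rw [nonsingular_iff, ha1, ha3]
    exact ⟨heq3, Or.inr fun h => h3yne (by linear_combination h)⟩
  have hns4 : (((⟨0, 0, 0, -2835, -71442⟩ : WeierstrassCurve ℚ).baseChange ℂ).toAffine).Nonsingular ((-9) + (36) * ζ ^ 2 + (36) * ζ ^ 5 : ℂ) (-((216) + (432) * ζ + (108) * ζ ^ 2 + (216) * ζ ^ 3 + (216) * ζ ^ 4 + (324) * ζ ^ 5 : ℂ)) := by
    have h := (nonsingular_neg _ _).mpr hns3
    rwa [hnegY] at h
  -- slope and addition computations
  have hyne' : ((108) + (216) * ζ + (108) * ζ ^ 2 + (324) * ζ ^ 3 + (-108) * ζ ^ 4 + (108) * ζ ^ 5 : ℂ) ≠ (((⟨0, 0, 0, -2835, -71442⟩ : WeierstrassCurve ℚ).baseChange ℂ).toAffine).negY ((-45) + (-36) * ζ ^ 2 + (-36) * ζ ^ 3 + (-36) * ζ ^ 4 + (-36) * ζ ^ 5 : ℂ) ((108) + (216) * ζ + (108) * ζ ^ 2 + (324) * ζ ^ 3 + (-108) * ζ ^ 4 + (108) * ζ ^ 5 : ℂ) := by rw [hnegY]; exact hyne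
  have hy2ne' : ((-216) * ζ ^ 2 + (-108) * ζ ^ 3 + (108) * ζ ^ 4 + (216) * ζ ^ 5 : ℂ) ≠ (((⟨0, 0, 0, -2835, -71442⟩ : WeierstrassCurve ℚ).baseChange ℂ).toAffine).negY ((-9) + (36) * ζ ^ 3 + (36) * ζ ^ 4 : ℂ) ((-216) * ζ ^ 2 + (-108) * ζ ^ 3 + (108) * ζ ^ 4 + (216) * ζ ^ 5 : ℂ) := by rw [hnegY]; exact hy2ne
  have hslope2 : (((⟨0, 0, 0, -2835, -71442⟩ : WeierstrassCurve ℚ).baseChange ℂ).toAffine).slope ((-45) + (-36) * ζ ^ 2 + (-36) * ζ ^ 3 + (-36) * ζ ^ 4 + (-36) * ζ ^ 5 : ℂ) ((-45) + (-36) * ζ ^ 2 + (-36) * ζ ^ 3 + (-36) * ζ ^ 4 + (-36) * ζ ^ 5 : ℂ) ((108) + (216) * ζ + (108) * ζ ^ 2 + (324) * ζ ^ 3 + (-108) * ζ ^ 4 + (108) * ζ ^ 5 : ℂ) ((108) + (216) * ζ + (108) * ζ ^ 2 + (324) * ζ ^ 3 + (-108) * ζ ^ 4 + (108) * ζ ^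 5 : ℂ) = ((-3) + (-6) * ζ + (-6) * ζ ^ 3 + (-6) * ζ ^ 5 : ℂ) := by
    rw [slope_of_Y_ne rfl hyne', hnegY, ha1, ha2, ha4,
      div_eq_iff (sub_ne_zero.mpr hyne)]
    linear_combination ((3888) + (-1296) * ζ + (10368) * ζ ^ 2 + (1296) * ζ ^ 3 + (5184) * ζ ^ 4 : ℂ) * hΦ
  have hslope4 : (((⟨0, 0, 0, -2835, -71442⟩ : WeierstrassCurve ℚ).baseChange ℂ).toAffine).slope ((-9) + (36) * ζ ^ 3 + (36) * ζ ^ 4 : ℂ) ((-9) + (36) * ζ ^ 3 + (36) * ζ ^ 4 : ℂ) ((-216) * ζ ^ 2 + (-108) * ζ ^ 3 + (108) * ζ ^ 4 + (216) * ζ ^ 5 : ℂ) ((-216) * ζ ^ 2 + (-108) * ζ ^ 3 + (108) * ζ ^ 4 + (216) * ζ ^ 5 : ℂ) = ((3) + (6) * ζ + (6) * ζ ^ 2 + (6) * ζ ^ 3 : ℂ) := by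
    rw [slope_of_Y_ne rfl hy2ne', hnegY, ha1, ha2, ha4,
      div_eq_iff (sub_ne_zero.mpr hy2ne)]
    linear_combination ((-2592) + (2592) * ζ + (1296) * ζ ^ 2 : ℂ) * hΦ
  have hslope3 : (((⟨0, 0, 0, -2835, -71442⟩ : WeierstrassCurve ℚ).baseChange ℂ).toAffine).slope ((-9) + (36) * ζ ^ 3 + (36) * ζ ^ 4 : ℂ) ((-45) + (-36) * ζ ^ 2 + (-36) * ζ ^ 3 + (-36) * ζ ^ 4 + (-36) * ζ ^ 5 : ℂ) ((-216) * ζ ^ 2 + (-108) * ζ ^ 3 + (108) * ζ ^ 4 + (216) * ζ ^ 5 : ℂ) ((108) + (216) * ζ + (108) * ζ ^ 2 + (324) * ζ ^ 3 + (-108) * ζ ^ 4 + (108) * ζ ^ 5 : ℂ) = ((3) + (6) * ζ + (6) * ζ ^ 2 + (6) * ζ ^ 4 : ℂ) := by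
    rw [slope_of_X_ne hx23, div_eq_iff (sub_ne_zero.mpr hx23)]
    linear_combination ((-216) + (-216) * ζ + (-216) * ζ ^ 2 + (-216) * ζ ^ 3 : ℂ) * hΦ
  have hx2eq : (((⟨0, 0, 0, -2835, -71442⟩ : WeierstrassCurve ℚ).baseChange ℂ).toAffine).addX ((-45) + (-36) * ζ ^ 2 + (-36) * ζ ^ 3 + (-36) * ζ ^ 4 + (-36) * ζ ^ 5 : ℂ) ((-45) + (-36) * ζ ^ 2 + (-36) * ζ ^ 3 + (-36) * ζ ^ 4 + (-36) * ζ ^ 5 : ℂ) ((((⟨0, 0, 0, -2835, -71442⟩ : WeierstrassCurve ℚ).baseChange ℂ).toAffine).slope ((-45) + (-36) * ζ ^ 2 + (-36) * ζ ^ 3 + (-36) * ζ ^ 4 + (-36) * ζ ^ 5 : ℂ) ((-45) + (-36) * ζ ^ 2 + (-36) * ζ ^ 3 + (-36) * ζ ^ 4 + (-36) * ζ ^ 5 : ℂ) ((108) + (216) * ζ + (108) * ζ ^ 2 + (324) * ζ ^ 3 + (-108) * ζ ^ 4 + (108) * ζ ^ 5 : ℂ) ((108) + (216) * ζ + (108)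 * ζ ^ 2 + (324) * ζ ^ 3 + (-108) * ζ ^ 4 + (108) * ζ ^ 5 : ℂ)) = ((-9) + (36) * ζ ^ 3 + (36) * ζ ^ 4 : ℂ) := by
    rw [hslope2]; simp only [addX, ha1, ha2]
    linear_combination ((108) + (-72) * ζ + (72) * ζ ^ 2 + (-36) * ζ ^ 3 + (36) * ζ ^ 4 : ℂ) * hΦ
  have hy2eq : (((⟨0, 0, 0, -2835, -71442⟩ : WeierstrassCurve ℚ).baseChange ℂ).toAffine).addY ((-45) + (-36) * ζ ^ 2 + (-36) * ζ ^ 3 + (-36) * ζ ^ 4 + (-36) * ζ ^ 5 : ℂ) ((-45) + (-36) * ζ ^ 2 + (-36) * ζ ^ 3 + (-36) * ζ ^ 4 + (-36) * ζ ^ 5 : ℂ) ((108) + (216) * ζ + (108) * ζ ^ 2 + (324) * ζ ^ 3 + (-108) * ζ ^ 4 + (108) * ζ ^ 5 : ℂ) ((((⟨0, 0, 0, -2835, -71442⟩ : WeierstrassCurve ℚ).baseChange ℂ).toAffine).slope ((-45) + (-36) * ζ ^ 2 + (-36) * ζ ^ 3 + (-36) * ζ ^ 4 + (-36) * ζ ^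 5 : ℂ) ((-45) + (-36) * ζ ^ 2 + (-36) * ζ ^ 3 + (-36) * ζ ^ 4 + (-36) * ζ ^ 5 : ℂ) ((108) + (216) * ζ + (108) * ζ ^ 2 + (324) * ζ ^ 3 + (-108) * ζ ^ 4 + (108) * ζ ^ 5 : ℂ) ((108) + (216) * ζ + (108) * ζ ^ 2 + (324) * ζ ^ 3 + (-108) * ζ ^ 4 + (108) * ζ ^ 5 : ℂ)) = ((-216) * ζ ^ 2 + (-108) * ζ ^ 3 + (108) * ζ ^ 4 + (216) * ζ ^ 5 : ℂ) := by
    rw [hslope2]; simp only [addY, negAddY, addX, negY, ha1, ha2, ha3]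
    linear_combination ((324) + (432) * ζ + (1188) * ζ ^ 3 + (-324) * ζ ^ 4 + (1296) * ζ ^ 5 + (-648) * ζ ^ 6 + (648) * ζ ^ 7 + (-216) * ζ ^ 8 + (216) * ζ ^ 9 : ℂ) * hΦ
  have hx3eq : (((⟨0, 0, 0, -2835, -71442⟩ : WeierstrassCurve ℚ).baseChange ℂ).toAffine).addX ((-9) + (36) * ζ ^ 3 + (36) * ζ ^ 4 : ℂ) ((-45) + (-36) * ζ ^ 2 + (-36) * ζ ^ 3 + (-36) * ζ ^ 4 + (-36) * ζ ^ 5 : ℂ) ((((⟨0, 0, 0, -2835, -71442⟩ : WeierstrassCurve ℚ).baseChange ℂ).toAffine).slope ((-9) + (36) * ζ ^ 3 + (36) * ζ ^ 4 : ℂ) ((-45) + (-36) * ζ ^ 2 + (-36) * ζ ^ 3 + (-36) * ζ ^ 4 + (-36) * ζ ^ 5 : ℂ) ((-216) * ζ ^ 2 + (-108) * ζ ^ 3 + (108) * ζ ^ 4 + (216) * ζ ^ 5 : ℂ) ((108) + (216) * ζ + (108) * ζ ^ 2 + (324) * ζ ^ 3 + (-108) * ζ ^ 4 + (108) * ζ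 ^ 5 : ℂ)) = ((-9) + (36) * ζ ^ 2 + (36) * ζ ^ 5 : ℂ) := by
    rw [hslope3]; simp only [addX, ha1, ha2]
    linear_combination ((72) + (-36) * ζ + (36) * ζ ^ 2 : ℂ) * hΦ
  have hy3eq : (((⟨0, 0, 0, -2835, -71442⟩ : WeierstrassCurve ℚ).baseChange ℂ).toAffine).addY ((-9) + (36) * ζ ^ 3 + (36) * ζ ^ 4 : ℂ) ((-45) + (-36) * ζ ^ 2 + (-36) * ζ ^ 3 + (-36) * ζ ^ 4 + (-36) * ζ ^ 5 : ℂ) ((-216) * ζ ^ 2 + (-108) * ζ ^ 3 + (108) * ζ ^ 4 + (216) * ζ ^ 5 : ℂ) ((((⟨0, 0, 0, -2835, -71442⟩ : WeierstrassCurve ℚ).baseChange ℂ).toAffine).slope ((-9) + (36) * ζ ^ 3 + (36) * ζ ^ 4 : ℂ) ((-45) + (-36) * ζ ^ 2 + (-36) * ζ ^ 3 + (-36) * ζ ^ 4 + (-36) * ζ ^ 5 : ℂ) ((-216) * ζ ^ 2 + (-108) * ζ ^ 3 + (108) * ζ ^ 4 + (216) * ζ ^ 5 : ℂ) ((108) +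 (216) * ζ + (108) * ζ ^ 2 + (324) * ζ ^ 3 + (-108) * ζ ^ 4 + (108) * ζ ^ 5 : ℂ)) = ((216) + (432) * ζ + (108) * ζ ^ 2 + (216) * ζ ^ 3 + (216) * ζ ^ 4 + (324) * ζ ^ 5 : ℂ) := by
    rw [hslope3]; simp only [addY, negAddY, addX, negY, ha1, ha2, ha3]
    linear_combination ((-432) + (-540) * ζ + (108) * ζ ^ 2 + (-216) * ζ ^ 3 + (-648) * ζ ^ 4 + (216) * ζ ^ 5 + (-216) * ζ ^ 6 : ℂ) * hΦ
  have hx4eq : (((⟨0, 0, 0, -2835, -71442⟩ : WeierstrassCurve ℚ).baseChange ℂ).toAffine).addX ((-9) + (36) * ζ ^ 3 + (36) * ζ ^ 4 : ℂ) ((-9) + (36) * ζ ^ 3 + (36) * ζ ^ 4 : ℂ) ((((⟨0, 0, 0, -2835, -71442⟩ : WeierstrassCurve ℚ).baseChange ℂ).toAffine).slope ((-9) + (36) * ζ ^ 3 + (36) * ζ ^ 4 : ℂ) ((-9) + (36) * ζ ^ 3 + (36) * ζ ^ 4 : ℂ) ((-216) * ζ ^ 2 + (-108) * ζ ^ 3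 + (108) * ζ ^ 4 + (216) * ζ ^ 5 : ℂ) ((-216) * ζ ^ 2 + (-108) * ζ ^ 3 + (108) * ζ ^ 4 + (216) * ζ ^ 5 : ℂ)) = ((-9) + (36) * ζ ^ 2 + (36) * ζ ^ 5 : ℂ) := by
    rw [hslope4]; simp only [addX, ha1, ha2]
    linear_combination ((36) : ℂ) * hΦ
  have hy4eq : (((⟨0, 0, 0, -2835, -71442⟩ : WeierstrassCurve ℚ).baseChange ℂ).toAffine).addY ((-9) + (36) * ζ ^ 3 + (36) * ζ ^ 4 : ℂ) ((-9) + (36) * ζ ^ 3 + (36) * ζ ^ 4 : ℂ) ((-216) * ζ ^ 2 + (-108) * ζ ^ 3 + (108) * ζ ^ 4 + (216) * ζ ^ 5 : ℂ) ((((⟨0, 0, 0, -2835, -71442⟩ : WeierstrassCurve ℚ).baseChange ℂ).toAffine).slope ((-9) + (36) * ζ ^ 3 + (36) * ζ ^ 4 : ℂ) ((-9) + (36) * ζ ^ 3 + (36) * ζ ^ 4 : ℂ) ((-216) * ζ ^ 2 + (-108) * ζ ^ 3 + (108) * ζ ^ 4 + (216) * ζ ^ 5 : ℂ) ((-216) *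 ζ ^ 2 + (-108) * ζ ^ 3 + (108) * ζ ^ 4 + (216) * ζ ^ 5 : ℂ)) = -((216) + (432) * ζ + (108) * ζ ^ 2 + (216) * ζ ^ 3 + (216) * ζ ^ 4 + (324) * ζ ^ 5 : ℂ) := by
    rw [hslope4]; simp only [addY, negAddY, addX, negY, ha1, ha2, ha3]
    linear_combination ((108) + (-432) * ζ ^ 2 + (-216) * ζ ^ 3 : ℂ) * hΦ
  -- group law computations
  have hP2 : Point.some _ _ hns + Point.some _ _ hns = Point.some _ _ hns2 := by
    rw [Point.add_self_of_Y_ne hyne']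
    exact some_ext hx2eq hy2eq _ _
  have hP3 : Point.some _ _ hns2 + Point.some _ _ hns = Point.some _ _ hns3 := by
    rw [Point.add_of_X_ne hx23]
    exact some_ext hx3eq hy3eq _ _
  have hP4 : Point.some _ _ hns2 + Point.some _ _ hns2 = Point.some _ _ hns4 := by
    rw [Point.add_self_of_Y_ne hy2ne']
    exact some_ext hx4eq hy4eq _ _
  have hP7 : Point.some _ _ hns4 + Point.some _ _ hns3 = 0 :=
    Point.add_of_Y_eq rfl (by rw [hnegY])
  have h7 : (7 : ℕ) • (Point.some _ _ hns) = 0 := by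
    have e : (7 : ℕ) • (Point.some _ _ hns) =
        ((Point.some _ _ hns + Point.some _ _ hns) + (Point.some _ _ hns + Point.some _ _ hns)) +
          ((Point.some _ _ hns + Point.some _ _ hns) + Point.some _ _ hns) := by abel
    rw [e, hP2, hP4, hP3, hP7]
  haveI : Fact (Nat.Prime 7) := ⟨by norm_num⟩
  have hord : addOrderOf (Point.some _ _ hns) = 7 :=
    addOrderOf_eq_prime h7 (Point.some_ne_zero hns)
  -- field memberships
  have hζZ : ζ ∈ IntermediateField.adjoin ℚ {ζ} :=
    IntermediateField.subset_adjoin ℚ {ζ} rfl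
  have hX0Z : ((-45) + (-36) * ζ ^ 2 + (-36) * ζ ^ 3 + (-36) * ζ ^ 4 + (-36) * ζ ^ 5 : ℂ) ∈ IntermediateField.adjoin ℚ {ζ} := by
    have h : ((-45) + (-36) * ζ ^ 2 + (-36) * ζ ^ 3 + (-36) * ζ ^ 4 + (-36) * ζ ^ 5 : ℂ) = ((-45 : ℚ) : ℂ) + ((0 : ℚ) : ℂ) * ζ + ((-36 : ℚ) : ℂ) * ζ ^ 2 + ((-36 : ℚ) : ℂ) * ζ ^ 3 + ((-36 : ℚ) : ℂ) * ζ ^ 4 + ((-36 : ℚ) : ℂ) * ζ ^ 5 := by push_cast; ring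
    rw [h]; exact polymem _ hζZ _ _ _ _ _ _
  have hY0Z : ((108) + (216) * ζ + (108) * ζ ^ 2 + (324) * ζ ^ 3 + (-108) * ζ ^ 4 + (108) * ζ ^ 5 : ℂ) ∈ IntermediateField.adjoin ℚ {ζ} := by
    have h : ((108) + (216) * ζ + (108) * ζ ^ 2 + (324) * ζ ^ 3 + (-108) * ζ ^ 4 + (108) * ζ ^ 5 : ℂ) = ((108 : ℚ) : ℂ) + ((216 : ℚ) : ℂ) * ζ + ((108 : ℚ) : ℂ) * ζ ^ 2 + ((324 : ℚ) : ℂ) * ζ ^ 3 + ((-108 : ℚ) : ℂ) * ζ ^ 4 + ((108 : ℚ) : ℂ) * ζ ^ 5 := by push_cast; ring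
    rw [h]; exact polymem _ hζZ _ _ _ _ _ _
  have hX0N : ((-45) + (-36) * ζ ^ 2 + (-36) * ζ ^ 3 + (-36) * ζ ^ 4 + (-36) * ζ ^ 5 : ℂ) ∈ IntermediateField.adjoin ℚ {((-45) + (-36) * ζ ^ 2 + (-36) * ζ ^ 3 + (-36) * ζ ^ 4 + (-36) * ζ ^ 5 : ℂ), ((108) + (216) * ζ + (108) * ζ ^ 2 + (324) * ζ ^ 3 + (-108) * ζ ^ 4 + (108) * ζ ^ 5 : ℂ)} :=
    IntermediateField.subset_adjoin ℚ _ (Set.mem_insert _ _)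
  have hY0N : ((108) + (216) * ζ + (108) * ζ ^ 2 + (324) * ζ ^ 3 + (-108) * ζ ^ 4 + (108) * ζ ^ 5 : ℂ) ∈ IntermediateField.adjoin ℚ {((-45) + (-36) * ζ ^ 2 + (-36) * ζ ^ 3 + (-36) * ζ ^ 4 + (-36) * ζ ^ 5 : ℂ), ((108) + (216) * ζ + (108) * ζ ^ 2 + (324) * ζ ^ 3 + (-108) * ζ ^ 4 + (108) * ζ ^ 5 : ℂ)} :=
    IntermediateField.subset_adjoin ℚ _ (Set.mem_insert_of_mem _ rfl)
  have hts : ζ + ζ ^ 6 = (((-45) + (-36) * ζ ^ 2 + (-36) * ζ ^ 3 + (-36) * ζ ^ 4 + (-36) * ζ ^ 5 : ℂ) + 9) / 36 := by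
    rw [eq_div_iff (by norm_num : (36 : ℂ) ≠ 0)]
    linear_combination ((36) : ℂ) * hΦ
  have hG : ((108) + (216) * ζ + (108) * ζ ^ 2 + (324) * ζ ^ 3 + (-108) * ζ ^ 4 + (108) * ζ ^ 5 : ℂ) / (3 * (((-45) + (-36) * ζ ^ 2 + (-36) * ζ ^ 3 + (-36) * ζ ^ 4 + (-36) * ζ ^ 5 : ℂ) + 9)) = (ζ + ζ ^ 2 + ζ ^ 4 - ζ ^ 3 - ζ ^ 5 - ζ ^ 6) := by
    rw [div_eq_iff (mul_ne_zero (by norm_num) hx9)]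
    linear_combination ((108) + (216) * ζ + (-108) * ζ ^ 2 + (108) * ζ ^ 3 + (-108) * ζ ^ 4 + (-108) * ζ ^ 5 : ℂ) * hΦ
  have hTN : ζ + ζ ^ 6 ∈ IntermediateField.adjoin ℚ {((-45) + (-36) * ζ ^ 2 + (-36) * ζ ^ 3 + (-36) * ζ ^ 4 + (-36) * ζ ^ 5 : ℂ), ((108) + (216) * ζ + (108) * ζ ^ 2 + (324) * ζ ^ 3 + (-108) * ζ ^ 4 + (108) * ζ ^ 5 : ℂ)} := by
    rw [hts]
    exact div_mem (add_mem hX0N (by simpa using qmem _ 9)) (by simpa using qmem _ 36)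
  have hGN : (ζ + ζ ^ 2 + ζ ^ 4 - ζ ^ 3 - ζ ^ 5 - ζ ^ 6) ∈ IntermediateField.adjoin ℚ {((-45) + (-36) * ζ ^ 2 + (-36) * ζ ^ 3 + (-36) * ζ ^ 4 + (-36) * ζ ^ 5 : ℂ), ((108) + (216) * ζ + (108) * ζ ^ 2 + (324) * ζ ^ 3 + (-108) * ζ ^ 4 + (108) * ζ ^ 5 : ℂ)} := by
    rw [← hG]
    exact div_mem hY0N (mul_mem (by simpa using qmem _ 3) (add_mem hX0N (by simpa using qmem _ 9)))
  have hζN : ζ ∈ IntermediateField.adjoin ℚ {((-45) + (-36) * ζ ^ 2 + (-36) * ζ ^ 3 + (-36) * ζ ^ 4 + (-36) * ζ ^ 5 : ℂ), ((108) + (216) * ζ + (108) * ζ ^ 2 + (324) * ζ ^ 3 + (-108) * ζ ^ 4 + (108) * ζ ^ 5 : ℂ)} := by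
    have h : ζ = (7 * (ζ + ζ ^ 6) + (6 + (ζ + ζ ^ 6) - 2 * (ζ + ζ ^ 6) ^ 2) * (ζ + ζ ^ 2 + ζ ^ 4 - ζ ^ 3 - ζ ^ 5 - ζ ^ 6)) / 14 := by
      rw [eq_div_iff (by norm_num : (14 : ℂ) ≠ 0)]
      linear_combination ((1) * ζ + (-8) * ζ ^ 2 + (14) * ζ ^ 3 + (-10) * ζ ^ 4 + (6) * ζ ^ 5 + (-1) * ζ ^ 6 + (-4) * ζ ^ 7 + (4) * ζ ^ 8 + (-4) * ζ ^ 9 + (4) * ζ ^ 10 + (-2) * ζ ^ 12 : ℂ) * hΦ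
    have hmem : (7 * (ζ + ζ ^ 6) + (6 + (ζ + ζ ^ 6) - 2 * (ζ + ζ ^ 6) ^ 2) * (ζ + ζ ^ 2 + ζ ^ 4 - ζ ^ 3 - ζ ^ 5 - ζ ^ 6)) / 14 ∈
        IntermediateField.adjoin ℚ {((-45) + (-36) * ζ ^ 2 + (-36) * ζ ^ 3 + (-36) * ζ ^ 4 + (-36) * ζ ^ 5 : ℂ), ((108) + (216) * ζ + (108) * ζ ^ 2 + (324) * ζ ^ 3 + (-108) * ζ ^ 4 + (108) * ζ ^ 5 : ℂ)} :=
      div_mem (add_mem (mul_mem (by simpa using qmem _ 7) hTN)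
        (mul_mem (sub_mem (add_mem (by simpa using qmem _ 6) hTN)
          (mul_mem (by simpa using qmem _ 2) (pow_mem hTN 2))) hGN)) (by simpa using qmem _ 14)
    rw [← h] at hmem
    exact hmem
  refine ⟨((-45) + (-36) * ζ ^ 2 + (-36) * ζ ^ 3 + (-36) * ζ ^ 4 + (-36) * ζ ^ 5 : ℂ), ((108) + (216) * ζ + (108) * ζ ^ 2 + (324) * ζ ^ 3 + (-108) * ζ ^ 4 + (108) * ζ ^ 5 : ℂ), hns, hord, ?_, ?_, (ζ + ζ ^ 2 + ζ ^ 4 - ζ ^ 3 - ζ ^ 5 - ζ ^ 6), hGN, by linear_combination ((7) + (-7) * ζ + (1) * ζ ^ 2 + (1) * ζ ^ 3 + (-3) * ζ ^ 4 + (1) * ζ ^ 5 + (1) * ζ ^ 6 : ℂ) * hΦ⟩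
  · -- ℚ(x₀) = ℚ(ζ + ζ⁻¹)
    rw [hζinv]
    apply le_antisymm
    · rw [IntermediateField.adjoin_le_iff, Set.singleton_subset_iff]
      have h : ((-45) + (-36) * ζ ^ 2 + (-36) * ζ ^ 3 + (-36) * ζ ^ 4 + (-36) * ζ ^ 5 : ℂ) = 36 * (ζ + ζ ^ 6) - 9 := by linear_combination ((-36) : ℂ) * hΦ
      rw [h]
      exact sub_mem (mul_mem (by simpa using qmem _ 36)
        (IntermediateField.subset_adjoin ℚ _ rfl)) (by simpa using qmem _ 9)
    · rw [IntermediateField.adjoin_le_iff, Set.singleton_subset_iff]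
      rw [hts]
      exact div_mem (add_mem (IntermediateField.subset_adjoin ℚ _ rfl)
        (by simpa using qmem _ 9)) (by simpa using qmem _ 36)
  · -- ℚ(x₀, y₀) = ℚ(ζ)
    apply le_antisymm
    · rw [IntermediateField.adjoin_le_iff, Set.insert_subset_iff, Set.singleton_subset_iff]
      exact ⟨hX0Z, hY0Z⟩
    · rw [IntermediateField.adjoin_le_iff, Set.singleton_subset_iff]
      exact hζN
end

section
/- Let d be a nonzero rational number and let E be the elliptic curve over ℚ given by y² = x³ − 595d²x + 5586d³ (a quadratic twist of the CM curve E_{7,2}). Let ζ = e^{2πi/7} and let F ⊆ ℂ be the subfield ℚ(ζ + ζ⁻¹, √(7d)). Then there exists a point P ∈ E(ℂ) of exact order 7 whose coordinates lie in F. -/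
open WeierstrassCurve WeierstrassCurve.Affine

/-- For a nonzero rational `d`, the quadratic twist `E^d : y² = x³ − 595d²x + 5586d³`
of the CM curve `E_{7,2}` has a point of exact order `7` whose coordinates lie in
`ℚ(ζ + ζ⁻¹, √(7d))`, where `ζ = e^{2πi/7}` and `√(7d)` is a complex square root
of `7d`. -/
theorem seven_torsion_point_twist_E_7_2 (d : ℚ) (hd : d ≠ 0)
    (E : WeierstrassCurve ℚ) (hE : E = ⟨0, 0, 0, -595 * d ^ 2, 5586 * d ^ 3⟩)
    (ζ : ℂ) (hζ : ζ = Complex.exp (2 * Real.pi * Complex.I / 7))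
    (s : ℂ) (hs : s ^ 2 = ((7 * d : ℚ) : ℂ)) :
    ∃ (x₀ y₀ : ℂ) (h : (E.baseChange ℂ).toAffine.Nonsingular x₀ y₀),
      addOrderOf (Point.some x₀ y₀ h : (E.baseChange ℂ).toAffine.Point) = 7 ∧
      x₀ ∈ IntermediateField.adjoin ℚ {ζ + ζ⁻¹, s} ∧
      y₀ ∈ IntermediateField.adjoin ℚ {ζ + ζ⁻¹, s} := by
  subst hE
  -- basic facts about ζ
  have hζ0 : ζ ≠ 0 := by
    rw [hζ]; exact Complex.exp_ne_zero _
  have hζ7 : ζ ^ 7 = 1 := by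
    rw [hζ, ← Complex.exp_nat_mul]
    rw [show (7 : ℕ) * (2 * (Real.pi : ℂ) * Complex.I / 7) = 2 * Real.pi * Complex.I by
      push_cast; ring]
    exact Complex.exp_two_pi_mul_I
  have hζ1 : ζ ≠ 1 := by
    rw [hζ]
    intro h
    have him : (Complex.exp (2 * (Real.pi : ℂ) * Complex.I / 7)).im =
        Real.sin (2 * Real.pi / 7) := by
      rw [show 2 * (Real.pi : ℂ) * Complex.I / 7 = ((2 * Real.pi / 7 : ℝ) : ℂ) * Complex.I by
        push_cast; ring]
      rw [Complex.exp_ofReal_mul_I_im]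
    rw [h] at him
    simp only [Complex.one_im] at him
    have hpos : 0 < Real.sin (2 * Real.pi / 7) := by
      apply Real.sin_pos_of_pos_of_lt_pi
      · positivity
      · nlinarith [Real.pi_pos]
    linarith [him ▸ hpos]
  have hΦ : ζ ^ 6 + ζ ^ 5 + ζ ^ 4 + ζ ^ 3 + ζ ^ 2 + ζ + 1 = 0 := by
    have h0 : (ζ - 1) * (ζ ^ 6 + ζ ^ 5 + ζ ^ 4 + ζ ^ 3 + ζ ^ 2 + ζ + 1) = 0 := by
      linear_combination hζ7
    rcases mul_eq_zero.mp h0 with h | h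
    · exact absurd (sub_eq_zero.mp h) hζ1
    · exact h
  have hinv : ζ⁻¹ = ζ ^ 6 := by
    apply inv_eq_of_mul_eq_one_right
    rw [← hζ7]; ring
  set c : ℂ := ζ + ζ⁻¹ with hc_def
  have hc : c ^ 3 + c ^ 2 - 2 * c - 1 = 0 := by
    rw [hc_def, hinv]
    linear_combination (2 + 3 * ζ + ζ ^ 4 + ζ ^ 5 + 3 * ζ ^ 6 + ζ ^ 11) * hζ7 + hΦ
  -- facts about s and d
  set dc : ℂ := (d : ℂ) with hdc_def
  have hdc : dc ≠ 0 := by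
    rw [hdc_def]; exact_mod_cast hd
  have hss : s ^ 2 = 7 * dc := by rw [hs]; push_cast; ring
  have hs0 : s ≠ 0 := by
    intro h
    apply hdc
    have : (7 : ℂ) * dc = 0 := by rw [← hss, h]; ring
    have h7 : (7 : ℂ) ≠ 0 := by norm_num
    exact (mul_eq_zero.mp this).resolve_left h7
  -- the curve over ℂ
  set W : WeierstrassCurve.Affine ℂ :=
    ((⟨0, 0, 0, -595 * d ^ 2, 5586 * d ^ 3⟩ : WeierstrassCurve ℚ).baseChange ℂ).toAffine with hW_def
  have ha1 : W.a₁ = 0 := by simp [hW_def]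
  have ha2 : W.a₂ = 0 := by simp [hW_def]
  have ha3 : W.a₃ = 0 := by simp [hW_def]
  have ha4 : W.a₄ = -595 * dc ^ 2 := by
    simp only [hW_def, map_a₄, WeierstrassCurve.baseChange]
    rw [eq_ratCast (algebraMap ℚ ℂ)]
    push_cast; ring
  have ha6 : W.a₆ = 5586 * dc ^ 3 := by
    simp only [hW_def, map_a₆, WeierstrassCurve.baseChange]
    rw [eq_ratCast (algebraMap ℚ ℂ)]
    push_cast; ring
  have hneg : ∀ x y : ℂ, W.negY x y = -y := by
    intro x y; simp only [negY, ha1, ha3]; ring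
  -- coordinates
  set X₁ : ℂ := dc * (13 - 4 * c + 4 * c ^ 2) with hX₁
  set Y₁ : ℂ := dc * s * (4 + 12 * c - 12 * c ^ 2) with hY₁
  set X₂ : ℂ := dc * (17 + 8 * c + 4 * c ^ 2) with hX₂
  set Y₂ : ℂ := dc * s * (-8 - 24 * c - 12 * c ^ 2) with hY₂
  set X₃ : ℂ := dc * (33 - 4 * c - 8 * c ^ 2) with hX₃
  set Y₃ : ℂ := dc * s * (56 - 12 * c - 24 * c ^ 2) with hY₃
  -- nonvanishing of the K-parts
  have hB1 : (4 + 12 * c - 12 * c ^ 2 : ℂ) ≠ 0 := by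
    have h : (4 + 12 * c - 12 * c ^ 2) * (1/4 + 3/2 * c + 3/4 * c ^ 2) = 1 := by
      linear_combination (-9 * c) * hc
    exact left_ne_zero_of_mul_eq_one h
  have hB2 : (-8 - 24 * c - 12 * c ^ 2 : ℂ) ≠ 0 := by
    have h : (-8 - 24 * c - 12 * c ^ 2) * (13/4 - 3/4 * c - 3/2 * c ^ 2) = 1 := by
      linear_combination (27 + 18 * c) * hc
    exact left_ne_zero_of_mul_eq_one h
  have hB3 : (56 - 12 * c - 24 * c ^ 2 : ℂ) ≠ 0 := by
    have h : (56 - 12 * c - 24 * c ^ 2) * (1/2 + 3/4 * c - 3/4 * c ^ 2) = 1 := by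
      linear_combination (-27 + 18 * c) * hc
    exact left_ne_zero_of_mul_eq_one h
  have hA21 : (4 + 12 * c : ℂ) ≠ 0 := by
    have h : (4 + 12 * c) * (-5/7 + 3/14 * c + 9/28 * c ^ 2) = 1 := by
      linear_combination (27/7 : ℂ) * hc
    exact left_ne_zero_of_mul_eq_one h
  have hY1ne : Y₁ ≠ 0 := by rw [hY₁]; exact mul_ne_zero (mul_ne_zero hdc hs0) hB1
  have hY2ne : Y₂ ≠ 0 := by rw [hY₂]; exact mul_ne_zero (mul_ne_zero hdc hs0) hB2
  have hY3ne : Y₃ ≠ 0 := by rw [hY₃]; exact mul_ne_zero (mul_ne_zero hdc hs0) hB3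
  have hX21 : X₂ ≠ X₁ := by
    intro h
    have h2 : dc * (4 + 12 * c) = 0 := by rw [hX₂, hX₁] at h; linear_combination h
    exact (mul_ne_zero hdc hA21) h2
  -- nonsingularity of the four points
  have hns : ∀ x y : ℂ, W.Equation x y → y ≠ 0 → W.Nonsingular x y := by
    intro x y heq hy
    rw [nonsingular_iff]
    refine ⟨heq, Or.inr ?_⟩
    rw [ha1, ha3]
    intro h
    exact hy (by linear_combination h / 2)
  have h1 : W.Nonsingular X₁ Y₁ := by
    apply hns _ _ ?_ hY1ne
    rw [equation_iff]
    simp only [ha1, ha2, ha3, ha4, ha6, hX₁, hY₁]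
    linear_combination ((-64) - 192 * c + 256 * c ^ 2 - 64 * c ^ 3) * dc ^ 3 * hc +
      (16 + 96 * c + 48 * c ^ 2 - 288 * c ^ 3 + 144 * c ^ 4) * dc ^ 2 * hss
  have h2 : W.Nonsingular X₂ Y₂ := by
    apply hns _ _ ?_ hY2ne
    rw [equation_iff]
    simp only [ha1, ha2, ha3, ha4, ha6, hX₂, hY₂]
    linear_combination ((-64) - 384 * c - 320 * c ^ 2 - 64 * c ^ 3) * dc ^ 3 * hc +
      (64 + 384 * c + 768 * c ^ 2 + 576 * c ^ 3 + 144 * c ^ 4) * dc ^ 2 * hss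
  have hE3 : W.Equation X₃ Y₃ := by
    rw [equation_iff]
    simp only [ha1, ha2, ha3, ha4, ha6, hX₃, hY₃]
    linear_combination ((-64) - 1152 * c + 256 * c ^ 2 + 512 * c ^ 3) * dc ^ 3 * hc +
      (3136 - 1344 * c - 2544 * c ^ 2 + 576 * c ^ 3 + 576 * c ^ 4) * dc ^ 2 * hss
  have h3 : W.Nonsingular X₃ Y₃ := hns _ _ hE3 hY3ne
  have h4 : W.Nonsingular X₃ (-Y₃) := by
    apply hns _ _ ?_ (neg_ne_zero.mpr hY3ne)
    rw [equation_iff]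
    simp only [ha1, ha2, ha3, ha4, ha6, hX₃, hY₃]
    linear_combination ((-64) - 1152 * c + 256 * c ^ 2 + 512 * c ^ 3) * dc ^ 3 * hc +
      (3136 - 1344 * c - 2544 * c ^ 2 + 576 * c ^ 3 + 576 * c ^ 4) * dc ^ 2 * hss
  -- Y ≠ negY conditions
  have hy1 : Y₁ ≠ W.negY X₁ Y₁ := by
    rw [hneg]; intro h; exact hY1ne (by linear_combination h / 2)
  have hy2 : Y₂ ≠ W.negY X₂ Y₂ := by
    rw [hneg]; intro h; exact hY2ne (by linear_combination h / 2)
  -- slopes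
  have hden1 : Y₁ - W.negY X₁ Y₁ ≠ 0 := sub_ne_zero.mpr hy1
  have hden2 : Y₂ - W.negY X₂ Y₂ ≠ 0 := sub_ne_zero.mpr hy2
  have hsl1 : W.slope X₁ X₁ Y₁ Y₁ = s * (-11 + 18 * c + 6 * c ^ 2) / 7 := by
    rw [slope_of_Y_ne rfl hy1, div_eq_iff hden1]
    simp only [negY, ha1, ha2, ha3, ha4, hX₁, hY₁]
    linear_combination (192 * c * dc ^ 2) * hc +
      ((88/7 + 120/7 * c - 744/7 * c ^ 2 + 288/7 * c ^ 3 + 144/7 * c ^ 4) * dc) * hss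
  have hsl2 : W.slope X₂ X₁ Y₂ Y₁ = -3 * s := by
    rw [slope_of_X_ne hX21, div_eq_iff (sub_ne_zero.mpr hX21)]
    simp only [hX₁, hX₂, hY₁, hY₂]; ring
  have hsl3 : W.slope X₂ X₂ Y₂ Y₂ = s * (19 - 12 * c - 18 * c ^ 2) / 7 := by
    rw [slope_of_Y_ne rfl hy2, div_eq_iff hden2]
    simp only [negY, ha1, ha2, ha3, ha4, hX₂, hY₂]
    linear_combination ((-576 - 384 * c) * dc ^ 2) * hc +
      ((304/7 + 720/7 * c - 408/7 * c ^ 2 - 1152/7 * c ^ 3 - 432/7 * c ^ 4) * dc) * hss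
  -- points
  set P : W.Point := Point.some X₁ Y₁ h1 with hP_def
  set P2 : W.Point := Point.some X₂ Y₂ h2 with hP2_def
  set P3 : W.Point := Point.some X₃ Y₃ h3 with hP3_def
  set P4 : W.Point := Point.some X₃ (-Y₃) h4 with hP4_def
  have e2 : P + P = P2 := by
    rw [hP_def, hP2_def, Point.add_self_of_Y_ne hy1]
    simp only [Point.some.injEq]
    constructor
    · rw [hsl1]; simp only [addX, hsl1, ha1, ha2, hX₁, hX₂]
      linear_combination ((180/7 + 36/7 * c) * dc) * hc +
        (121/49 - 396/49 * c + 192/49 * c ^ 2 + 216/49 * c ^ 3 + 36/49 * c ^ 4) * hss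
    · rw [hsl1]; simp only [addY, negAddY, addX, negY, hsl1, ha1, ha2, ha3, hX₁, hY₁, hX₂, hY₂]
      linear_combination ((1476/49 - 2844/49 * c - 1728/49 * c ^ 2 - 216/49 * c ^ 3) * s * dc) * hc
        + ((1331/343 - 6534/343 * c + 8514/343 * c ^ 2 + 1296/343 * c ^ 3 - 4644/343 * c ^ 4
          - 1944/343 * c ^ 5 - 216/343 * c ^ 6) * s) * hss
  have e3 : P2 + P = P3 := by
    rw [hP2_def, hP_def, hP3_def, Point.add_of_X_ne hX21]
    simp only [Point.some.injEq]
    constructor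
    · rw [hsl2]; simp only [addX, hsl2, ha1, ha2, hX₁, hX₂, hX₃]
      linear_combination (9 : ℂ) * hss
    · rw [hsl2]; simp only [addY, negAddY, addX, negY, hsl2, ha1, ha2, ha3, hX₁, hX₂, hY₂, hX₃, hY₃]
      linear_combination (27 * s) * hss
  have e4 : P2 + P2 = P4 := by
    rw [hP2_def, hP4_def, Point.add_self_of_Y_ne hy2]
    simp only [Point.some.injEq]
    constructor
    · rw [hsl3]; simp only [addX, hsl3, ha1, ha2, hX₂, hX₃]
      linear_combination ((108/7 + 324/7 * c) * dc) * hc +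
        (361/49 - 456/49 * c - 540/49 * c ^ 2 + 432/49 * c ^ 3 + 324/49 * c ^ 4) * hss
    · rw [hsl3]; simp only [addY, negAddY, addX, negY, hsl3, ha1, ha2, ha3, hX₂, hY₂, hX₃, hY₃]
      linear_combination ((-3060/49 - 6372/49 * c + 5832/49 * c ^ 2 + 5832/49 * c ^ 3) * s * dc)
        * hc + ((-6859/343 + 12996/343 * c + 11286/343 * c ^ 2 - 22896/343 * c ^ 3
          - 10692/343 * c ^ 4 + 11664/343 * c ^ 5 + 5832/343 * c ^ 6) * s) * hss
  have e0 : P4 + P3 = 0 := by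
    rw [hP4_def, hP3_def]
    apply Point.add_of_Y_eq rfl
    rw [hneg]
  have h7P : (7 : ℕ) • P = 0 := by
    have hsum : (7 : ℕ) • P = ((P + P) + (P + P)) + ((P + P) + P) := by abel
    rw [hsum, e2, e4, e3, e0]
  haveI : Fact (Nat.Prime 7) := ⟨by norm_num⟩
  have hPord : addOrderOf P = 7 :=
    addOrderOf_eq_prime h7P (Point.some_ne_zero h1)
  -- memberships
  set F := IntermediateField.adjoin ℚ {c, s} with hF_def
  have hcF : c ∈ F := IntermediateField.subset_adjoin ℚ _ (Set.mem_insert _ _)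
  have hsF : s ∈ F := IntermediateField.subset_adjoin ℚ _ (Set.mem_insert_of_mem _ rfl)
  have hq : ∀ q : ℚ, ((q : ℂ)) ∈ F := fun q =>
    (eq_ratCast (algebraMap ℚ ℂ) q) ▸ F.algebraMap_mem q
  have hdF : dc ∈ F := hq d
  refine ⟨X₁, Y₁, h1, hPord, ?_, ?_⟩
  · rw [hX₁]
    refine mul_mem hdF (add_mem (sub_mem ?_ (mul_mem ?_ hcF)) (mul_mem ?_ (pow_mem hcF 2)))
    · exact_mod_cast hq 13
    · exact_mod_cast hq 4
    · exact_mod_cast hq 4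
  · rw [hY₁]
    refine mul_mem (mul_mem hdF hsF) (sub_mem (add_mem ?_ (mul_mem ?_ hcF))
      (mul_mem ?_ (pow_mem hcF 2)))
    · exact_mod_cast hq 4
    · exact_mod_cast hq 12
    · exact_mod_cast hq 12
end

section
/- Let E be the elliptic curve over ℚ given by y² = x³ − 15x + 22 (the CM curve E_{3,2}). Then the subfield of ℂ generated over ℚ by the coordinates of all points P ∈ E(ℂ) with 3P = O equals ℚ(√−3, 2^{1/3}), where 2^{1/3} is the real cube root of 2; that is, ℚ(E[3]) = ℚ(√−3, ∛2). -/
open WeierstrassCurve WeierstrassCurve.Affine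

noncomputable abbrev W32 : WeierstrassCurve.Affine ℂ :=
  ((⟨0, 0, 0, -15, 22⟩ : WeierstrassCurve ℚ).baseChange ℂ).toAffine

lemma W32_a₁ : W32.a₁ = 0 := by norm_num [WeierstrassCurve.map]
lemma W32_a₂ : W32.a₂ = 0 := by norm_num [WeierstrassCurve.map]
lemma W32_a₃ : W32.a₃ = 0 := by norm_num [WeierstrassCurve.map]
lemma W32_a₄ : W32.a₄ = -15 := by norm_num [WeierstrassCurve.map]
lemma W32_a₆ : W32.a₆ = 22 := by norm_num [WeierstrassCurve.map]

lemma W32_equation_iff (x y : ℂ) : W32.Equation x y ↔ y ^ 2 = x ^ 3 - 15 * x + 22 := by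
  rw [equation_iff, W32_a₁, W32_a₂, W32_a₃, W32_a₄, W32_a₆]
  constructor <;> intro h <;> linear_combination h

lemma W32_negY (x y : ℂ) : W32.negY x y = -y := by
  rw [negY, W32_a₁, W32_a₃]; ring

lemma W32_nonsingular {x y : ℂ} (h : y ^ 2 = x ^ 3 - 15 * x + 22) (hy : y ≠ 0) :
    W32.Nonsingular x y := by
  rw [nonsingular_iff, W32_equation_iff, W32_a₁, W32_a₃]
  refine ⟨h, Or.inr ?_⟩
  intro hyy
  exact hy (by linear_combination hyy / 2)

lemma Point.some_eq_some' {W : WeierstrassCurve.Affine ℂ} {x₁ y₁ x₂ y₂ : ℂ}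
    (h₁ : W.Nonsingular x₁ y₁) (h₂ : W.Nonsingular x₂ y₂) (hx : x₁ = x₂) (hy : y₁ = y₂) :
    Point.some _ _ h₁ = Point.some _ _ h₂ := by subst hx; subst hy; rfl

lemma W32_three_smul_iff {x y : ℂ} (h : W32.Nonsingular x y) :
    3 • (Point.some _ _ h : W32.Point) = 0 ↔
      y ≠ 0 ∧ (x - 3) * (x ^ 3 + 3 * x ^ 2 - 21 * x + 25) = 0 := by
  have hy2 : y ^ 2 = x ^ 3 - 15 * x + 22 := (W32_equation_iff x y).mp h.left
  have h3 : (3 : ℕ) • (Point.some _ _ h : W32.Point) = Point.some _ _ h + Point.some _ _ h + Point.some _ _ h := by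
    rw [show (3 : ℕ) = 2 + 1 from rfl, add_nsmul, two_nsmul, one_nsmul]
  by_cases hy0 : y = 0
  · subst hy0
    have hyneg : (0 : ℂ) = W32.negY x 0 := by rw [W32_negY]; ring
    have h2 : (Point.some _ _ h : W32.Point) + Point.some _ _ h = 0 := Point.add_self_of_Y_eq hyneg
    rw [h3, h2, zero_add]
    constructor
    · intro h0; exact absurd h0 (Point.some_ne_zero h)
    · rintro ⟨h0, -⟩; exact absurd rfl h0
  · have hy : y ≠ W32.negY x y := by
      rw [W32_negY]; intro hh; exact hy0 (by linear_combination hh / 2)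
    have hadd := nonsingular_add h h (fun hh => hy hh.2)
    have h2P : (Point.some _ _ h : W32.Point) + Point.some _ _ h = Point.some _ _ hadd :=
      Point.add_self_of_Y_ne hy
    have h2y : (2 * y) ≠ 0 := mul_ne_zero two_ne_zero hy0
    have hs : W32.slope x x y y = (3 * x ^ 2 - 15) / (2 * y) := by
      rw [slope_of_Y_ne rfl hy, W32_negY, W32_a₁, W32_a₂, W32_a₄]
      ring
    have hxadd : W32.addX x x (W32.slope x x y y) = ((3 * x ^ 2 - 15) / (2 * y)) ^ 2 - 2 * x := by
      rw [hs, addX, W32_a₁, W32_a₂]; ring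
    have key : W32.addX x x (W32.slope x x y y) = x ↔
        (x - 3) * (x ^ 3 + 3 * x ^ 2 - 21 * x + 25) = 0 := by
      rw [hxadd]
      constructor
      · intro hh
        have hl2 : ((3 * x ^ 2 - 15) / (2 * y)) ^ 2 = 3 * x := by linear_combination hh
        have hmc := div_mul_cancel₀ (3 * x ^ 2 - 15) h2y
        have hh2 : (3 * x ^ 2 - 15) ^ 2 = 3 * x * (2 * y) ^ 2 := by
          calc (3 * x ^ 2 - 15) ^ 2 = (((3 * x ^ 2 - 15) / (2 * y)) * (2 * y)) ^ 2 := by rw [hmc]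
          _ = ((3 * x ^ 2 - 15) / (2 * y)) ^ 2 * (2 * y) ^ 2 := by ring
          _ = 3 * x * (2 * y) ^ 2 := by rw [hl2]
        linear_combination (-(1 : ℂ) / 3) * hh2 - (4 * x) * hy2
      · intro hh
        have hl2' : (3 * x ^ 2 - 15) ^ 2 = 3 * x * (2 * y) ^ 2 := by
          linear_combination (-3 : ℂ) * hh - (12 * x) * hy2
        have hl2 : ((3 * x ^ 2 - 15) / (2 * y)) ^ 2 = 3 * x := by
          rw [div_pow, hl2', mul_div_assoc, div_self (pow_ne_zero 2 h2y), mul_one]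
        linear_combination hl2
    constructor
    · intro h0
      refine ⟨hy0, key.mp ?_⟩
      rw [h3, h2P] at h0
      have h4 : Point.some _ _ hadd = -Point.some _ _ h := eq_neg_of_add_eq_zero_left h0
      rw [Point.neg_some, Point.some.injEq] at h4
      exact h4.1
    · rintro ⟨-, hq⟩
      have hx' := key.mpr hq
      rcases Y_eq_of_X_eq hadd.left h.left hx' with hYe | hYe
      · exfalso
        have heqP : Point.some _ _ hadd = Point.some _ _ h := Point.some_eq_some' _ _ hx' hYe
        have h5 : (Point.some _ _ h : W32.Point) + Point.some _ _ h = 0 + Point.some _ _ h := by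
          rw [zero_add, h2P, heqP]
        exact Point.some_ne_zero h (add_right_cancel h5)
      · have heqP : Point.some _ _ hadd = -Point.some _ _ h := by
          rw [Point.neg_some]; exact Point.some_eq_some' _ _ hx' hYe
        rw [h3, h2P, heqP, neg_add_cancel]

lemma mem_adjoin_tc {t c : ℂ} (a b d e f g : ℚ) (z : ℂ)
    (hz : z = (a : ℂ) + b * t + d * c + e * c ^ 2 + f * t * c + g * t * c ^ 2) :
    z ∈ IntermediateField.adjoin ℚ {t, c} := by
  have ht' : t ∈ IntermediateField.adjoin ℚ {t, c} :=
    IntermediateField.subset_adjoin ℚ _ (Set.mem_insert _ _)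
  have hc' : c ∈ IntermediateField.adjoin ℚ {t, c} :=
    IntermediateField.subset_adjoin ℚ _ (Set.mem_insert_of_mem _ rfl)
  have hq : ∀ q : ℚ, (q : ℂ) ∈ IntermediateField.adjoin ℚ {t, c} := fun q =>
    SubfieldClass.ratCast_mem _ q
  rw [hz]
  exact add_mem (add_mem (add_mem (add_mem (add_mem (hq a) (mul_mem (hq b) ht'))
    (mul_mem (hq d) hc')) (mul_mem (hq e) (pow_mem hc' 2)))
    (mul_mem (mul_mem (hq f) ht') hc')) (mul_mem (mul_mem (hq g) ht') (pow_mem hc' 2))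

/-- For the CM curve `E_{3,2} : y² = x³ − 15x + 22`, the field generated over `ℚ` by the
coordinates of all points `P ∈ E(ℂ)` with `3P = O` is `ℚ(√−3, ∛2)`. -/
theorem three_torsion_field_E_3_2
    (E : WeierstrassCurve ℚ) (hE : E = ⟨0, 0, 0, -15, 22⟩)
    (t : ℂ) (ht : t ^ 2 = -3) :
    IntermediateField.adjoin ℚ
        {c : ℂ | ∃ (x y : ℂ) (h : (E.baseChange ℂ).toAffine.Nonsingular x y),
          3 • (Point.some x y h : (E.baseChange ℂ).toAffine.Point) = 0 ∧ (c = x ∨ c = y)} =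
      IntermediateField.adjoin ℚ {t, (((2 : ℝ) ^ ((1 : ℝ) / 3) : ℝ) : ℂ)} := by
  subst hE
  set c2 : ℂ := (((2 : ℝ) ^ ((1 : ℝ) / 3) : ℝ) : ℂ) with hc2def
  have hr3 : ((2 : ℝ) ^ ((1 : ℝ) / 3)) ^ (3 : ℕ) = 2 := by
    rw [← Real.rpow_natCast ((2 : ℝ) ^ ((1 : ℝ) / 3)) 3, ← Real.rpow_mul (by norm_num)]
    norm_num
  have hc : c2 ^ 3 = 2 := by
    rw [hc2def]
    exact_mod_cast congrArg (Complex.ofReal) hr3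
  have ht0 : t ≠ 0 := by
    intro h
    rw [h] at ht
    norm_num at ht
  have hprod : (2*t*(1 + c2 + c2^2)) * (2*t + (-3-t)*c2 + (3-t)*c2^2) * (2*t + (3-t)*c2 + (-3-t)*c2^2) = -24 * t := by
    linear_combination ((8) * t + (-6) * t * c2^2 + (-10) * t * c2^3 + (6) * t * c2^5 + (2) * t * c2^6) * ht + ((-24) * t * c2^3) * hc
  have hy0ne : (2*t*(1 + c2 + c2^2)) ≠ 0 := by
    intro hz
    rw [hz, zero_mul, zero_mul] at hprod
    exact ht0 (by linear_combination (1 / 24 : ℂ) * hprod)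
  have hy1ne : (2*t + (-3-t)*c2 + (3-t)*c2^2) ≠ 0 := by
    intro hz
    rw [hz, mul_zero, zero_mul] at hprod
    exact ht0 (by linear_combination (1 / 24 : ℂ) * hprod)
  have hy2ne : (2*t + (3-t)*c2 + (-3-t)*c2^2) ≠ 0 := by
    intro hz
    rw [hz, mul_zero] at hprod
    exact ht0 (by linear_combination (1 / 24 : ℂ) * hprod)
  apply le_antisymm
  · rw [IntermediateField.adjoin_le_iff]
    rintro c ⟨x, y, h, h3P, hcxy⟩
    obtain ⟨hy0, hq⟩ := (W32_three_smul_iff h).mp h3P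
    have hy2 : y ^ 2 = x ^ 3 - 15 * x + 22 := (W32_equation_iff x y).mp h.left
    have hfac : (x - 3) * (x - (-1 - 2*c2 - 2*c2^2)) * (x - (-1 + (1-t)*c2 + (1+t)*c2^2)) * (x - (-1 + (1+t)*c2 + (1-t)*c2^2)) = 0 := by
      linear_combination hq + ((3) * c2^2 + (2) * c2^2 * x + (-1) * c2^2 * x^2 + (-6) * c2^3 * x + (2) * c2^3 * x^2 + (-3) * c2^4 + (4) * c2^4 * x + (-1) * c2^4 * x^2 + (-6) * c2^5 + (2) * c2^5 * x + (6) * c2^6 + (-2) * c2^6 * x) * ht + ((-36) + (48) * x + (-12) * x^2 + (-24) * c2^3 + (8) * c2^3 * x) * hc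
    have hboth : x ∈ IntermediateField.adjoin ℚ {t, c2} ∧
        y ∈ IntermediateField.adjoin ℚ {t, c2} := by
      rcases mul_eq_zero.mp hfac with h123 | h4
      · rcases mul_eq_zero.mp h123 with h12 | h3'
        · rcases mul_eq_zero.mp h12 with h1 | h2
          · have hx : x = 3 := sub_eq_zero.mp h1
            rw [hx] at hy2
            constructor
            · rw [hx]
              exact mem_adjoin_tc 3 0 0 0 0 0 _ (by push_cast; ring)
            · rcases mul_eq_zero.mp
                  (show (y - 2) * (y + 2) = 0 by linear_combination hy2) with hh | hh
              · rw [sub_eq_zero.mp hh]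
                exact mem_adjoin_tc 2 0 0 0 0 0 _ (by push_cast; ring)
              · rw [eq_neg_of_add_eq_zero_left hh]
                exact mem_adjoin_tc (-2) 0 0 0 0 0 _ (by push_cast; ring)
          · have hx : x = (-1 - 2*c2 - 2*c2^2) := sub_eq_zero.mp h2
            rw [hx] at hy2
            constructor
            · rw [hx]
              exact mem_adjoin_tc (-1) 0 (-2) (-2) 0 0 _ (by push_cast; ring)
            · have hsq : y ^ 2 = ((2*t*(1 + c2 + c2^2))) ^ 2 := by
                linear_combination hy2 - ((4) + (8) * c2 + (12) * c2^2 + (8) * c2^3 + (4) * c2^4) * ht - ((24) + (24) * c2 + (24) * c2^2 + (8) * c2^3) * hc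
              rcases mul_eq_zero.mp (show (y - (2*t*(1 + c2 + c2^2))) * (y + (2*t*(1 + c2 + c2^2))) = 0 by
                  linear_combination hsq) with hh | hh
              · rw [sub_eq_zero.mp hh]
                exact mem_adjoin_tc 0 2 0 0 2 2 _ (by push_cast; ring)
              · rw [eq_neg_of_add_eq_zero_left hh]
                exact mem_adjoin_tc 0 (-2) 0 0 (-2) (-2) _ (by push_cast; ring)
        · have hx : x = (-1 + (1-t)*c2 + (1+t)*c2^2) := sub_eq_zero.mp h3'
          rw [hx] at hy2
          constructor
          · rw [hx]
            exact mem_adjoin_tc (-1) 0 1 1 (-1) 1 _ (by push_cast; ring)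
          · have hsq : y ^ 2 = ((2*t + (-3-t)*c2 + (3-t)*c2^2)) ^ 2 := by
              linear_combination hy2 - ((4) + (-4) * c2 + (-7) * c2^3 + (7) * c2^4 + (3) * c2^5 + (-3) * c2^6 + (1) * t * c2^3 + (-3) * t * c2^4 + (3) * t * c2^5 + (-1) * t * c2^6) * ht - ((24) + (-12) * c2 + (-12) * c2^2 + (8) * c2^3 + (12) * t * c2 + (-12) * t * c2^2) * hc
            rcases mul_eq_zero.mp (show (y - (2*t + (-3-t)*c2 + (3-t)*c2^2)) * (y + (2*t + (-3-t)*c2 + (3-t)*c2^2)) = 0 by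
                linear_combination hsq) with hh | hh
            · rw [sub_eq_zero.mp hh]
              exact mem_adjoin_tc 0 2 (-3) 3 (-1) (-1) _ (by push_cast; ring)
            · rw [eq_neg_of_add_eq_zero_left hh]
              exact mem_adjoin_tc 0 (-2) 3 (-3) 1 1 _ (by push_cast; ring)
      · have hx : x = (-1 + (1+t)*c2 + (1-t)*c2^2) := sub_eq_zero.mp h4
        rw [hx] at hy2
        constructor
        · rw [hx]
          exact mem_adjoin_tc (-1) 0 1 1 1 (-1) _ (by push_cast; ring)
        · have hsq : y ^ 2 = ((2*t + (3-t)*c2 + (-3-t)*c2^2)) ^ 2 := by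
            linear_combination hy2 - ((4) + (-4) * c2 + (-7) * c2^3 + (7) * c2^4 + (3) * c2^5 + (-3) * c2^6 + (-1) * t * c2^3 + (3) * t * c2^4 + (-3) * t * c2^5 + (1) * t * c2^6) * ht - ((24) + (-12) * c2 + (-12) * c2^2 + (8) * c2^3 + (-12) * t * c2 + (12) * t * c2^2) * hc
          rcases mul_eq_zero.mp (show (y - (2*t + (3-t)*c2 + (-3-t)*c2^2)) * (y + (2*t + (3-t)*c2 + (-3-t)*c2^2)) = 0 by
              linear_combination hsq) with hh | hh
          · rw [sub_eq_zero.mp hh]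
            exact mem_adjoin_tc 0 2 3 (-3) (-1) (-1) _ (by push_cast; ring)
          · rw [eq_neg_of_add_eq_zero_left hh]
            exact mem_adjoin_tc 0 (-2) (-3) 3 1 1 _ (by push_cast; ring)
    rcases hcxy with rfl | rfl
    · exact hboth.1
    · exact hboth.2
  · rw [IntermediateField.adjoin_le_iff]
    set L := IntermediateField.adjoin ℚ
        {c : ℂ | ∃ (x y : ℂ)
            (h : ((⟨0, 0, 0, -15, 22⟩ : WeierstrassCurve ℚ).baseChange ℂ).toAffine.Nonsingular x y),
          3 • (Point.some x y h : ((⟨0, 0, 0, -15, 22⟩ : WeierstrassCurve ℚ).baseChange ℂ).toAffine.Point) = 0 ∧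
            (c = x ∨ c = y)} with hL
    have hns0 : W32.Nonsingular (-1 - 2*c2 - 2*c2^2) (2*t*(1 + c2 + c2^2)) :=
      W32_nonsingular (by linear_combination ((4) + (8) * c2 + (12) * c2^2 + (8) * c2^3 + (4) * c2^4) * ht + ((24) + (24) * c2 + (24) * c2^2 + (8) * c2^3) * hc) hy0ne
    have hns1 : W32.Nonsingular (-1 + (1-t)*c2 + (1+t)*c2^2) (2*t + (-3-t)*c2 + (3-t)*c2^2) :=
      W32_nonsingular (by linear_combination ((4) + (-4) * c2 + (-7) * c2^3 + (7) * c2^4 + (3) * c2^5 + (-3) * c2^6 + (1) * t * c2^3 + (-3) * t * c2^4 + (3) * t * c2^5 + (-1) * t * c2^6) * ht + ((24) + (-12) * c2 + (-12) * c2^2 + (8) * c2^3 + (12) * t * c2 + (-12) * t * c2^2) * hc) hy1ne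
    have hns2 : W32.Nonsingular (-1 + (1+t)*c2 + (1-t)*c2^2) (2*t + (3-t)*c2 + (-3-t)*c2^2) :=
      W32_nonsingular (by linear_combination ((4) + (-4) * c2 + (-7) * c2^3 + (7) * c2^4 + (3) * c2^5 + (-3) * c2^6 + (-1) * t * c2^3 + (3) * t * c2^4 + (-3) * t * c2^5 + (1) * t * c2^6) * ht + ((24) + (-12) * c2 + (-12) * c2^2 + (8) * c2^3 + (-12) * t * c2 + (12) * t * c2^2) * hc) hy2ne
    have h3s0 : 3 • (Point.some _ _ hns0 : W32.Point) = 0 :=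
      (W32_three_smul_iff hns0).mpr ⟨hy0ne, by linear_combination (0) * ht + ((96) + (144) * c2 + (192) * c2^2 + (128) * c2^3 + (64) * c2^4 + (16) * c2^5) * hc⟩
    have h3s1 : 3 • (Point.some _ _ hns1 : W32.Point) = 0 :=
      (W32_three_smul_iff hns1).mpr ⟨hy1ne, by linear_combination ((-24) * c2^2 + (36) * c2^3 + (-9) * c2^4 + (24) * c2^5 + (-42) * c2^6 + (12) * c2^7 + (3) * c2^8 + (4) * t * c2^3 + (-16) * t * c2^4 + (20) * t * c2^5 + (-4) * t * c2^6 + (-8) * t * c2^7 + (4) * t * c2^8 + (1) * t^2 * c2^4 + (-4) * t^2 * c2^5 + (6) * t^2 * c2^6 + (-4) * t^2 * c2^7 + (1) * t^2 * c2^8) * ht + ((96) + (-72) * c2 + (-96) * c2^2 + (128) * c2^3 + (-32) * c2^4 + (-8) * c2^5 + (72) * t * c2 + (-96) * t * c2^2 + (32) * t * c2^4 + (-8) * t * c2^5) * hc⟩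
    have h3s2 : 3 • (Point.some _ _ hns2 : W32.Point) = 0 :=
      (W32_three_smul_iff hns2).mpr ⟨hy2ne, by linear_combination ((-24) * c2^2 + (36) * c2^3 + (-9) * c2^4 + (24) * c2^5 + (-42) * c2^6 + (12) * c2^7 + (3) * c2^8 + (-4) * t * c2^3 + (16) * t * c2^4 + (-20) * t * c2^5 + (4) * t * c2^6 + (8) * t * c2^7 + (-4) * t * c2^8 + (1) * t^2 * c2^4 + (-4) * t^2 * c2^5 + (6) * t^2 * c2^6 + (-4) * t^2 * c2^7 + (1) * t^2 * c2^8) * ht + ((96) + (-72) * c2 + (-96) * c2^2 + (128) * c2^3 + (-32) * c2^4 + (-8) * c2^5 + (-72) * t * c2 + (96) * t * c2^2 + (-32) * t * c2^4 + (8) * t * c2^5) * hc⟩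
    have hx0m : (-1 - 2*c2 - 2*c2^2) ∈ L :=
      IntermediateField.subset_adjoin ℚ _ ⟨(-1 - 2*c2 - 2*c2^2), (2*t*(1 + c2 + c2^2)), hns0, h3s0, Or.inl rfl⟩
    have hx1m : (-1 + (1-t)*c2 + (1+t)*c2^2) ∈ L :=
      IntermediateField.subset_adjoin ℚ _ ⟨(-1 + (1-t)*c2 + (1+t)*c2^2), (2*t + (-3-t)*c2 + (3-t)*c2^2), hns1, h3s1, Or.inl rfl⟩
    have hx2m : (-1 + (1+t)*c2 + (1-t)*c2^2) ∈ L :=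
      IntermediateField.subset_adjoin ℚ _ ⟨(-1 + (1+t)*c2 + (1-t)*c2^2), (2*t + (3-t)*c2 + (-3-t)*c2^2), hns2, h3s2, Or.inl rfl⟩
    have h2L : (2 : ℂ) ∈ L := by exact_mod_cast natCast_mem L 2
    have h3L : (3 : ℂ) ∈ L := by exact_mod_cast natCast_mem L 3
    have h1den : (1 : ℂ) + c2 + c2 ^ 2 ≠ 0 := by
      have hcast : ((1 + (2 : ℝ) ^ ((1 : ℝ) / 3) + ((2 : ℝ) ^ ((1 : ℝ) / 3)) ^ 2 : ℝ) : ℂ)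
          = 1 + c2 + c2 ^ 2 := by
        rw [hc2def]; push_cast; ring
      rw [← hcast, Complex.ofReal_ne_zero]
      positivity
    have hc2m : c2 ∈ L := by
      have e1 : ((1 : ℂ) - (-1 - 2*c2 - 2*c2^2)) / 2 = 1 + c2 + c2 ^ 2 := by ring
      have heq : c2 = (((3 : ℂ) - (-1 - 2*c2 - 2*c2^2)) / 2) / (((1 : ℂ) - (-1 - 2*c2 - 2*c2^2)) / 2) := by
        rw [eq_div_iff (by rw [e1]; exact h1den)]
        linear_combination hc
      rw [heq]
      exact div_mem (div_mem (sub_mem h3L hx0m) h2L) (div_mem (sub_mem (one_mem L) hx0m) h2L)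
    have hccne : c2 - c2 ^ 2 ≠ 0 := by
      have hrne : (2 : ℝ) ^ ((1 : ℝ) / 3) - ((2 : ℝ) ^ ((1 : ℝ) / 3)) ^ 2 ≠ 0 := by
        intro hzz
        have hre : (2 : ℝ) ^ ((1 : ℝ) / 3) = ((2 : ℝ) ^ ((1 : ℝ) / 3)) ^ 2 := by
          linear_combination hzz
        have hr2 : (2 : ℝ) = (2 : ℝ) ^ ((1 : ℝ) / 3) := by
          linear_combination (-((2 : ℝ) ^ ((1 : ℝ) / 3) + 1)) * hre - hr3
        rw [← hr2] at hr3
        norm_num at hr3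
      have hcast : (((2 : ℝ) ^ ((1 : ℝ) / 3) - ((2 : ℝ) ^ ((1 : ℝ) / 3)) ^ 2 : ℝ) : ℂ)
          = c2 - c2 ^ 2 := by
        rw [hc2def]; push_cast; ring
      rw [← hcast, Complex.ofReal_ne_zero]
      exact hrne
    have htm : t ∈ L := by
      have heq : t = ((-1 + (1+t)*c2 + (1-t)*c2^2) - (-1 + (1-t)*c2 + (1+t)*c2^2)) / (2 * (c2 - c2 ^ 2)) := by
        rw [eq_div_iff (mul_ne_zero two_ne_zero hccne)]
        ring
      rw [heq]
      exact div_mem (sub_mem hx2m hx1m) (mul_mem h2L (sub_mem hc2m (pow_mem hc2m 2)))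
    rintro z (rfl | rfl)
    · exact htm
    · exact hc2m
end
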